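/- arXiv:1507.06015 — 6 statements merged into one kernel-verified Lean document; each statement's English description precedes it below -/
import Mathlib

section
/- Let X₁, X₂, ... be i.i.d. real random variables with finite second moment whose common distribution has a positive continuous density near the α-quantile v_α. Define the empirical CVaR estimator ĉ_α^N = v̂_α^N + (1/((1-α)N)) Σ_{i=1}^N (X_i − v̂_α^N)⁺, where v̂_α^N is the sample α-quantile. Then ĉ_α^N converges almost surely to c_α = v_α + (1/(1-α)) E[(X − v_α)⁺] as N → ∞. -/
open MeasureTheory ProbabilityTheory Filter Set

/-- Empirical c.d.f. of the first `N` observations. -/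
noncomputable def empCDF {Ω : Type*} (X : ℕ → Ω → ℝ) (N : ℕ) (ω : Ω) (t : ℝ) : ℝ :=
  (N : ℝ)⁻¹ * ∑ i ∈ Finset.range N, if X i ω ≤ t then (1 : ℝ) else 0

/-- Sample `α`-quantile (the `⌈αN⌉`-th order statistic) of the first `N` observations. -/
noncomputable def sampleQuantile {Ω : Type*} (X : ℕ → Ω → ℝ) (N : ℕ) (α : ℝ) (ω : Ω) : ℝ :=
  sInf {t : ℝ | α ≤ empCDF X N ω t}

lemma empCDF_mono {Ω : Type*} (X : ℕ → Ω → ℝ) (N : ℕ) (ω : Ω) {s t : ℝ} (h : s ≤ t) :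
    empCDF X N ω s ≤ empCDF X N ω t := by
  unfold empCDF
  apply mul_le_mul_of_nonneg_left _ (by positivity)
  apply Finset.sum_le_sum
  intro i _
  split_ifs with h1 h2
  · exact le_refl 1
  · exact absurd (h1.trans h) h2
  · norm_num
  · exact le_refl 0

/-- SLLN for a measurable integrable transform of an i.i.d. sequence. -/
lemma slln_comp {Ω : Type*} {mΩ : MeasurableSpace Ω} (μ : Measure Ω) [IsProbabilityMeasure μ]
    (X : ℕ → Ω → ℝ) (hmeas : ∀ i, Measurable (X i))
    (hindep : iIndepFun X μ)
    (hident : ∀ i, μ.map (X i) = μ.map (X 0))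
    (g : ℝ → ℝ) (hg : Measurable g) (hint : Integrable (fun ω => g (X 0 ω)) μ) :
    ∀ᵐ ω ∂μ, Tendsto (fun N : ℕ => (N : ℝ)⁻¹ * ∑ i ∈ Finset.range N, g (X i ω)) atTop
      (nhds (∫ ω, g (X 0 ω) ∂μ)) := by
  have hid : ∀ i, IdentDistrib (fun ω => g (X i ω)) (fun ω => g (X 0 ω)) μ μ := by
    intro i
    exact IdentDistrib.comp ⟨(hmeas i).aemeasurable, (hmeas 0).aemeasurable, hident i⟩ hg
  have hind : Pairwise (Function.onFun (IndepFun · · μ) (fun i ω => g (X i ω))) := by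
    intro i j hij
    exact (hindep.indepFun hij).comp hg hg
  have h := strong_law_ae_real (fun i ω => g (X i ω)) hint hind hid
  filter_upwards [h] with ω hω
  convert hω using 2 with N
  rw [div_eq_inv_mul]

/-- Strong consistency of the empirical CVaR estimator. -/
theorem empiricalCVaR_tendsto_CVaR {Ω : Type*} {mΩ : MeasurableSpace Ω}
    (μ : Measure Ω) [IsProbabilityMeasure μ]
    (X : ℕ → Ω → ℝ) (hmeas : ∀ i, Measurable (X i))
    (hindep : iIndepFun X μ)
    (hident : ∀ i, μ.map (X i) = μ.map (X 0))
    (hsq : Integrable (fun ω => (X 0 ω) ^ 2) μ)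
    (f : ℝ → ℝ)
    (hdens : μ.map (X 0) = volume.withDensity (fun t => ENNReal.ofReal (f t)))
    (α : ℝ) (hα : α ∈ Set.Ioo (0 : ℝ) 1)
    (vα : ℝ) (hvα : vα = sInf {t : ℝ | α ≤ ((μ.map (X 0)) (Set.Iic t)).toReal})
    (hf : ∃ ε > 0, ContinuousOn f (Metric.ball vα ε) ∧ ∀ t ∈ Metric.ball vα ε, 0 < f t) :
    ∀ᵐ ω ∂μ, Tendsto
      (fun N : ℕ => sampleQuantile X N α ω +
        ((1 - α) * N)⁻¹ * ∑ i ∈ Finset.range N, max (X i ω - sampleQuantile X N α ω) 0)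
      atTop (nhds (vα + (1 - α)⁻¹ * ∫ ω, max (X 0 ω - vα) 0 ∂μ)) := by
  obtain ⟨hα0, hα1⟩ := hα
  obtain ⟨ε₀, hε₀, hcont, hposf⟩ := hf
  set ν := μ.map (X 0) with hν
  haveI : IsProbabilityMeasure ν := Measure.isProbabilityMeasure_map (hmeas 0).aemeasurable
  set F : ℝ → ℝ := fun t => (ν (Iic t)).toReal with hF
  have hFmono : Monotone F := fun s t h =>
    ENNReal.toReal_mono (measure_ne_top _ _) (measure_mono (Iic_subset_Iic.2 h))
  set S : Set ℝ := {t : ℝ | α ≤ F t} with hS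
  have hSup : ∀ {s t : ℝ}, s ∈ S → s ≤ t → t ∈ S := fun hs h => hs.trans (hFmono h)
  -- S is nonempty
  have hS_ne : S.Nonempty := by
    have h1 : Tendsto (fun n : ℕ => ν (Iic (n : ℝ))) atTop (nhds (ν univ)) := by
      have := tendsto_measure_iUnion_atTop (μ := ν) (s := fun n : ℕ => Iic (n : ℝ))
        (fun a b hab => Iic_subset_Iic.2 (by exact_mod_cast hab))
      have hU : (⋃ n : ℕ, Iic (n : ℝ)) = univ := by
        ext x; simp only [mem_iUnion, mem_Iic, mem_univ, iff_true]
        obtain ⟨n, hn⟩ := exists_nat_ge x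
        exact ⟨n, hn⟩
      rwa [hU] at this
    have hlt : ENNReal.ofReal α < ν univ := by
      rw [measure_univ]
      exact_mod_cast ENNReal.ofReal_lt_one.2 hα1
    obtain ⟨n, hn⟩ := (h1.eventually (eventually_gt_nhds hlt)).exists
    exact ⟨n, (ENNReal.ofReal_le_iff_le_toReal (measure_ne_top _ _)).1 hn.le⟩
  -- S is bounded below
  have hS_bdd : BddBelow S := by
    have h2 : Tendsto (fun n : ℕ => ν (Iic (-(n : ℝ)))) atTop
        (nhds (ν (⋂ n : ℕ, Iic (-(n : ℝ))))) :=
      tendsto_measure_iInter_atTop (fun n => measurableSet_Iic.nullMeasurableSet)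
        (fun a b hab => Iic_subset_Iic.2 (by exact_mod_cast neg_le_neg (Nat.cast_le.2 hab)))
        ⟨0, measure_ne_top _ _⟩
    have hI : (⋂ n : ℕ, Iic (-(n : ℝ))) = ∅ := by
      ext x; simp only [mem_iInter, mem_Iic, mem_empty_iff_false, iff_false, not_forall]
      obtain ⟨n, hn⟩ := exists_nat_gt (-x)
      exact ⟨n, by push_neg; linarith⟩
    rw [hI, measure_empty] at h2
    obtain ⟨n, hn⟩ := (h2.eventually (eventually_lt_nhds (show (0:ENNReal) < ENNReal.ofReal α from
      ENNReal.ofReal_pos.2 hα0))).exists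
    refine ⟨-(n : ℝ), fun t ht => ?_⟩
    by_contra hc
    push_neg at hc
    have hmem : (-(n:ℝ)) ∈ S := hSup ht hc.le
    have hFn : F (-(n:ℝ)) < α := (ENNReal.lt_ofReal_iff_toReal_lt (measure_ne_top _ _)).1 hn
    exact absurd hmem (by simp only [hS, mem_setOf_eq, not_le]; exact hFn)
  -- α ≤ F vα (right-continuity of the CDF)
  have hvα_mem : α ≤ F vα := by
    have hseq : ∀ n : ℕ, (vα + 1 / ((n : ℝ) + 1)) ∈ S := by
      intro n
      have hlt : sInf S < vα + 1 / ((n : ℝ) + 1) := by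
        rw [← hvα]; have : (0:ℝ) < 1 / ((n:ℝ)+1) := by positivity
        linarith
      obtain ⟨x, hxS, hxlt⟩ := (csInf_lt_iff hS_bdd hS_ne).1 hlt
      exact hSup hxS hxlt.le
    have h3 : Tendsto (fun n : ℕ => ν (Iic (vα + 1 / ((n : ℝ) + 1)))) atTop
        (nhds (ν (⋂ n : ℕ, Iic (vα + 1 / ((n : ℝ) + 1))))) :=
      tendsto_measure_iInter_atTop (fun n => measurableSet_Iic.nullMeasurableSet)
        (fun a b hab => Iic_subset_Iic.2 (by
          have : 1 / ((b:ℝ)+1) ≤ 1 / ((a:ℝ)+1) := by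
            apply one_div_le_one_div_of_le (by positivity)
            exact_mod_cast add_le_add_left (Nat.cast_le.2 hab) 1
          linarith))
        ⟨0, measure_ne_top _ _⟩
    have hIeq : (⋂ n : ℕ, Iic (vα + 1 / ((n : ℝ) + 1))) = Iic vα := by
      ext x
      simp only [mem_iInter, mem_Iic]
      constructor
      · intro h
        by_contra hc
        push_neg at hc
        obtain ⟨n, hn⟩ := exists_nat_one_div_lt (show (0:ℝ) < x - vα by linarith)
        have := h n
        linarith
      · intro h n
        have : (0:ℝ) < 1 / ((n:ℝ)+1) := by positivity
        linarith
    rw [hIeq] at h3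
    have hle : ENNReal.ofReal α ≤ ν (Iic vα) := by
      refine ge_of_tendsto h3 (Eventually.of_forall fun n => ?_)
      exact (ENNReal.ofReal_le_iff_le_toReal (measure_ne_top _ _)).2 (hseq n)
    exact (ENNReal.ofReal_le_iff_le_toReal (measure_ne_top _ _)).1 hle
  -- below vα, F < α
  have hFlt : ∀ t, t < vα → F t < α := by
    intro t ht
    by_contra hc
    push_neg at hc
    have : vα ≤ t := hvα ▸ csInf_le hS_bdd hc
    linarith
  -- above vα (inside the density ball), F > α
  have hFgt : ∀ e : ℝ, 0 < e → e < ε₀ → α < F (vα + e) := by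
    intro e he heε
    set p := vα + e / 2 with hp
    have hpball : p ∈ Metric.ball vα ε₀ := by
      simp only [Metric.mem_ball, Real.dist_eq, hp]
      rw [abs_of_pos (by linarith)]
      linarith
    have hfp : 0 < f p := hposf p hpball
    have hca : ContinuousAt f p := hcont.continuousAt (Metric.isOpen_ball.mem_nhds hpball)
    have hev : {x | f p / 2 < f x} ∈ nhds p := hca (Ioi_mem_nhds (by linarith))
    obtain ⟨δ, hδ0, hδ⟩ := Metric.mem_nhds_iff.1 hev
    set δ' := min δ (e / 2) with hδ'
    have hδ'0 : 0 < δ' := lt_min hδ0 (by linarith)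
    have hball_sub : Metric.ball p δ' ⊆ Ioc vα (vα + e) := by
      intro x hx
      simp only [Metric.mem_ball, Real.dist_eq] at hx
      have h1 : |x - p| < e / 2 := lt_of_lt_of_le hx (min_le_right _ _)
      rw [abs_lt] at h1
      simp only [hp] at h1
      exact ⟨by linarith [h1.1], by linarith [h1.2]⟩
    have hIocpos : 0 < ν (Ioc vα (vα + e)) := by
      rw [hdens, withDensity_apply _ measurableSet_Ioc]
      calc (0:ENNReal) < ENNReal.ofReal (f p / 2) * volume (Metric.ball p δ') := by
            apply ENNReal.mul_pos
            · simp only [ne_eq, ENNReal.ofReal_eq_zero, not_le]; linarith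
            · exact (Metric.measure_ball_pos volume p hδ'0).ne'
        _ = ∫⁻ x in Metric.ball p δ', ENNReal.ofReal (f p / 2) ∂volume := by
            rw [setLIntegral_const]
        _ ≤ ∫⁻ x in Metric.ball p δ', ENNReal.ofReal (f x) ∂volume := by
            apply lintegral_mono_ae
            refine (ae_restrict_iff' Metric.isOpen_ball.measurableSet).2
              (Eventually.of_forall fun x hx => ?_)
            exact ENNReal.ofReal_le_ofReal (hδ (Metric.ball_subset_ball (min_le_left _ _) hx)).le
        _ ≤ ∫⁻ x in Ioc vα (vα + e), ENNReal.ofReal (f x) ∂volume :=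
            lintegral_mono_set hball_sub
    have hsplit : ν (Iic (vα + e)) = ν (Iic vα) + ν (Ioc vα (vα + e)) := by
      rw [← Iic_union_Ioc_eq_Iic (by linarith : vα ≤ vα + e),
        measure_union (Iic_disjoint_Ioc le_rfl) measurableSet_Ioc]
    have hFe : F (vα + e) = F vα + (ν (Ioc vα (vα + e))).toReal := by
      simp only [hF]
      rw [hsplit, ENNReal.toReal_add (measure_ne_top _ _) (measure_ne_top _ _)]
    have : 0 < (ν (Ioc vα (vα + e))).toReal :=
      ENNReal.toReal_pos hIocpos.ne' (measure_ne_top _ _)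
    rw [hFe]
    linarith
  -- SLLN for the empirical CDF at a fixed point
  have hemp : ∀ t : ℝ, ∀ᵐ ω ∂μ, Tendsto (fun N => empCDF X N ω t) atTop (nhds (F t)) := by
    intro t
    have hg : Measurable (fun x : ℝ => if x ≤ t then (1:ℝ) else 0) :=
      Measurable.ite measurableSet_Iic measurable_const measurable_const
    have hintg : Integrable (fun ω => if X 0 ω ≤ t then (1:ℝ) else 0) μ := by
      refine Integrable.mono' (integrable_const (1:ℝ))
        ((hg.comp (hmeas 0)).aestronglyMeasurable) (Eventually.of_forall fun ω => ?_)
      split_ifs <;> simp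
    have hI : (∫ ω, (if X 0 ω ≤ t then (1:ℝ) else 0) ∂μ) = F t := by
      have heq : (fun ω => if X 0 ω ≤ t then (1:ℝ) else 0)
          = Set.indicator (X 0 ⁻¹' Iic t) (fun _ => (1:ℝ)) := by
        classical
        funext ω
        rw [Set.indicator_apply]
        simp only [Set.mem_preimage, mem_Iic]
      rw [heq, integral_indicator_const _ ((hmeas 0) measurableSet_Iic)]
      show (μ (X 0 ⁻¹' Iic t)).toReal • (1:ℝ) = (ν (Iic t)).toReal
      rw [hν, Measure.map_apply (hmeas 0) measurableSet_Iic, smul_eq_mul, mul_one]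
    have h := slln_comp μ X hmeas hindep hident _ hg hintg
    rw [hI] at h
    exact h
  -- the gauge sequence
  set e : ℕ → ℝ := fun k => min ε₀ 1 / (k + 2) with he
  have he_pos : ∀ k, 0 < e k := by
    intro k
    show 0 < min ε₀ 1 / ((k:ℝ) + 2)
    apply div_pos (lt_min hε₀ one_pos) (by positivity)
  have he_lt : ∀ k, e k < ε₀ := by
    intro k
    simp only [he]
    have h2 : (2:ℝ) ≤ (k:ℝ) + 2 := by
      have : (0:ℝ) ≤ (k:ℝ) := Nat.cast_nonneg k
      linarith
    have h1 : min ε₀ 1 / ((k:ℝ) + 2) ≤ ε₀ / 2 :=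
      div_le_div₀ (by linarith) (min_le_left _ _) (by norm_num) h2
    linarith
  -- a.s. convergence of the sample quantile
  have hquant : ∀ᵐ ω ∂μ, Tendsto (fun N => sampleQuantile X N α ω) atTop (nhds vα) := by
    have hall := ae_all_iff.2 (fun k : ℕ => ((hemp (vα + e k)).and (hemp (vα - e k))))
    filter_upwards [hall] with ω hω
    rw [Metric.tendsto_atTop]
    intro ε hε
    obtain ⟨k, hk⟩ : ∃ k : ℕ, e k < ε := by
      obtain ⟨n, hn⟩ := exists_nat_gt (min ε₀ 1 / ε)
      refine ⟨n, ?_⟩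
      simp only [he]
      rw [div_lt_iff₀ (by positivity)]
      rw [div_lt_iff₀ hε] at hn
      nlinarith
    have h1 : ∀ᶠ N in atTop, α < empCDF X N ω (vα + e k) :=
      (hω k).1.eventually (eventually_gt_nhds (hFgt (e k) (he_pos k) (he_lt k)))
    have h2 : ∀ᶠ N in atTop, empCDF X N ω (vα - e k) < α :=
      (hω k).2.eventually (eventually_lt_nhds (hFlt _ (by linarith [he_pos k])))
    obtain ⟨N₀, hN₀⟩ := eventually_atTop.1 (h1.and h2)
    refine ⟨N₀, fun n hn => ?_⟩
    obtain ⟨ha1, ha2⟩ := hN₀ n hn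
    have hlb : ∀ t ∈ {t : ℝ | α ≤ empCDF X n ω t}, vα - e k ≤ t := by
      intro t ht
      by_contra hc
      push_neg at hc
      have hm := empCDF_mono X n ω hc.le
      have : α ≤ empCDF X n ω (vα - e k) := le_trans ht hm
      linarith
    have hmem : vα + e k ∈ {t : ℝ | α ≤ empCDF X n ω t} := ha1.le
    have hup : sampleQuantile X n α ω ≤ vα + e k :=
      csInf_le ⟨vα - e k, fun t ht => hlb t ht⟩ hmem
    have hlo : vα - e k ≤ sampleQuantile X n α ω := le_csInf ⟨_, hmem⟩ hlb
    rw [Real.dist_eq, abs_lt]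
    constructor <;> linarith
  -- integrability
  have hX0int : Integrable (X 0) μ := by
    refine Integrable.mono' (hsq.add (integrable_const 1)) (hmeas 0).aestronglyMeasurable
      (Eventually.of_forall fun ω => ?_)
    show ‖X 0 ω‖ ≤ X 0 ω ^ 2 + 1
    rw [Real.norm_eq_abs]
    nlinarith [sq_abs (X 0 ω), sq_nonneg (|X 0 ω| - 1), abs_nonneg (X 0 ω)]
  have hmax_meas : Measurable (fun x : ℝ => max (x - vα) 0) :=
    (measurable_id.sub measurable_const).max measurable_const
  have hmaxint : Integrable (fun ω => max (X 0 ω - vα) 0) μ := by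
    refine Integrable.mono' (hX0int.abs.add (integrable_const |vα|))
      ((hmax_meas.comp (hmeas 0)).aestronglyMeasurable) (Eventually.of_forall fun ω => ?_)
    show ‖max (X 0 ω - vα) 0‖ ≤ |X 0 ω| + |vα|
    rw [Real.norm_eq_abs, abs_of_nonneg (le_max_right _ _)]
    rcases le_total (X 0 ω - vα) 0 with h | h
    · rw [max_eq_right h]
      positivity
    · rw [max_eq_left h]
      have h2 : |X 0 ω - vα| ≤ |X 0 ω| + |vα| := by
        rw [sub_eq_add_neg]
        calc |X 0 ω + -vα| ≤ |X 0 ω| + |(-vα)| := abs_add_le _ _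
          _ = |X 0 ω| + |vα| := by rw [abs_neg]
      calc X 0 ω - vα ≤ |X 0 ω - vα| := le_abs_self _
        _ ≤ |X 0 ω| + |vα| := h2
  have hSLLN2 := slln_comp μ X hmeas hindep hident (fun x => max (x - vα) 0) hmax_meas hmaxint
  -- combine
  filter_upwards [hquant, hSLLN2] with ω hq hs
  have herr : ∀ N : ℕ,
      ‖((N:ℝ)⁻¹ * ∑ i ∈ Finset.range N, max (X i ω - sampleQuantile X N α ω) 0)
        - ((N:ℝ)⁻¹ * ∑ i ∈ Finset.range N, max (X i ω - vα) 0)‖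
      ≤ |sampleQuantile X N α ω - vα| := by
    intro N
    rw [Real.norm_eq_abs]
    rcases Nat.eq_zero_or_pos N with h0 | hNpos
    · subst h0; simp
    · rw [← mul_sub, ← Finset.sum_sub_distrib, abs_mul, abs_inv, Nat.abs_cast]
      have hsum : |∑ i ∈ Finset.range N,
          (max (X i ω - sampleQuantile X N α ω) 0 - max (X i ω - vα) 0)|
          ≤ (N:ℝ) * |sampleQuantile X N α ω - vα| := by
        refine (Finset.abs_sum_le_sum_abs _ _).trans ?_
        have hterm : ∀ i ∈ Finset.range N,
            |max (X i ω - sampleQuantile X N α ω) 0 - max (X i ω - vα) 0|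
            ≤ |sampleQuantile X N α ω - vα| := by
          intro i _
          refine (abs_max_sub_max_le_abs _ _ _).trans ?_
          have : (X i ω - sampleQuantile X N α ω) - (X i ω - vα)
              = -(sampleQuantile X N α ω - vα) := by ring
          rw [this, abs_neg]
        calc (∑ i ∈ Finset.range N,
              |max (X i ω - sampleQuantile X N α ω) 0 - max (X i ω - vα) 0|)
            ≤ ∑ _i ∈ Finset.range N, |sampleQuantile X N α ω - vα| :=
              Finset.sum_le_sum hterm
          _ = (N:ℝ) * |sampleQuantile X N α ω - vα| := by
              rw [Finset.sum_const, Finset.card_range, nsmul_eq_mul]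
      calc ((N:ℝ))⁻¹ * |∑ i ∈ Finset.range N,
            (max (X i ω - sampleQuantile X N α ω) 0 - max (X i ω - vα) 0)|
          ≤ (N:ℝ)⁻¹ * ((N:ℝ) * |sampleQuantile X N α ω - vα|) :=
            mul_le_mul_of_nonneg_left hsum (by positivity)
        _ = |sampleQuantile X N α ω - vα| := by
            have hN : ((N:ℝ)) ≠ 0 := Nat.cast_ne_zero.2 hNpos.ne'
            field_simp
  have hd : Tendsto (fun N : ℕ =>
      ((N:ℝ)⁻¹ * ∑ i ∈ Finset.range N, max (X i ω - sampleQuantile X N α ω) 0)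
        - ((N:ℝ)⁻¹ * ∑ i ∈ Finset.range N, max (X i ω - vα) 0)) atTop (nhds 0) := by
    apply squeeze_zero_norm herr
    have h := (hq.sub (tendsto_const_nhds (x := vα))).abs
    simpa using h
  have hAt : Tendsto (fun N : ℕ =>
      (N:ℝ)⁻¹ * ∑ i ∈ Finset.range N, max (X i ω - sampleQuantile X N α ω) 0) atTop
      (nhds (∫ ω, max (X 0 ω - vα) 0 ∂μ)) := by
    have h := hd.add hs
    simp only [sub_add_cancel, zero_add] at h
    exact h
  have hfinal := hq.add (hAt.const_mul (1 - α)⁻¹)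
  have heq : ∀ N : ℕ, sampleQuantile X N α ω +
      ((1 - α) * N)⁻¹ * ∑ i ∈ Finset.range N, max (X i ω - sampleQuantile X N α ω) 0
      = sampleQuantile X N α ω +
        (1 - α)⁻¹ * ((N:ℝ)⁻¹ * ∑ i ∈ Finset.range N, max (X i ω - sampleQuantile X N α ω) 0) := by
    intro N
    rw [mul_inv]
    ring
  simp only [heq]
  exact hfinal
end

section
/- Let X₁, X₂, ... be i.i.d. with finite second moment, α ∈ (0,1), and v_α the α-quantile of their common distribution (with positive continuous density near v_α). Define the CVaR estimator ĉ_α^N via sample quantile plug-in. Then ĉ_α^N − c_α = ((1/N) Σ_{i=1}^N [v_α + (1/(1−α))(X_i − v_α)⁺] − c_α) + B_N, where B_N = O(N^{−1} log N) almost surely. -/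
open scoped ENNReal


open MeasureTheory ProbabilityTheory Filter Set

section Det

variable {Ω : Type*} (X : ℕ → Ω → ℝ) (ω : Ω) (N : ℕ) {α : ℝ}

lemma cnt_mono {s t : ℝ} (hst : s ≤ t) :
    (∑ i ∈ Finset.range N, if X i ω ≤ s then (1 : ℝ) else 0) ≤
      ∑ i ∈ Finset.range N, if X i ω ≤ t then (1 : ℝ) else 0 := by
  refine Finset.sum_le_sum fun i _ => ?_
  split_ifs with h1 h2 <;> norm_num
  exact absurd (h1.trans hst) h2

lemma quantSet_nonempty (hN : 0 < N) (hα1 : α ≤ 1) :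
    {t : ℝ | α ≤ empCDF X N ω t}.Nonempty := by
  have hne : (Finset.range N).Nonempty := Finset.nonempty_range_iff.2 hN.ne'
  refine ⟨(Finset.range N).sup' hne (fun i => X i ω), ?_⟩
  have : (∑ i ∈ Finset.range N, if X i ω ≤ (Finset.range N).sup' hne (fun i => X i ω)
      then (1 : ℝ) else 0) = N := by
    rw [Finset.sum_congr rfl fun i hi => if_pos (Finset.le_sup' (fun i => X i ω) hi)]
    simp
  simp only [Set.mem_setOf_eq, empCDF, this]
  rw [inv_mul_cancel₀ (by positivity)]
  exact hα1

lemma quantSet_bddBelow (hN : 0 < N) (hα0 : 0 < α) :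
    BddBelow {t : ℝ | α ≤ empCDF X N ω t} := by
  have hne : (Finset.range N).Nonempty := Finset.nonempty_range_iff.2 hN.ne'
  refine ⟨(Finset.range N).inf' hne (fun i => X i ω), fun t ht => ?_⟩
  by_contra hlt
  push_neg at hlt
  have hz : (∑ i ∈ Finset.range N, if X i ω ≤ t then (1 : ℝ) else 0) = 0 := by
    rw [Finset.sum_congr rfl fun i hi => if_neg (by
      push_neg
      exact lt_of_lt_of_le hlt (Finset.inf'_le _ hi))]
    simp
  have := ht
  simp only [Set.mem_setOf_eq, empCDF, hz, mul_zero] at this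
  linarith

lemma quantile_mem (hN : 0 < N) (hα : α ∈ Set.Ioo (0:ℝ) 1) :
    α * N ≤ ∑ i ∈ Finset.range N, if X i ω ≤ sampleQuantile X N α ω then (1 : ℝ) else 0 := by
  classical
  set q := sampleQuantile X N α ω with hq
  have hne := quantSet_nonempty X ω N hN hα.2.le
  have hbdd := quantSet_bddBelow X ω N hN hα.1
  -- find t ∈ S with cnt t = cnt q
  have key : ∃ t, α ≤ empCDF X N ω t ∧
      (∑ i ∈ Finset.range N, if X i ω ≤ t then (1 : ℝ) else 0) =
      (∑ i ∈ Finset.range N, if X i ω ≤ q then (1 : ℝ) else 0) := by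
    set A := (Finset.range N).filter (fun i => q < X i ω) with hA
    by_cases hAne : A.Nonempty
    · set m := A.inf' hAne (fun i => X i ω) with hm
      have hqm : q < m := by
        rw [hm, Finset.lt_inf'_iff]
        intro i hi
        exact (Finset.mem_filter.1 hi).2
      obtain ⟨t, htS, htlt⟩ := (csInf_lt_iff hbdd hne).1 (show sInf {t : ℝ | α ≤ empCDF X N ω t} < m from hqm)
      have hqt : q ≤ t := csInf_le hbdd htS
      refine ⟨t, htS, Finset.sum_congr rfl fun i hi => ?_⟩
      by_cases hxi : X i ω ≤ q
      · rw [if_pos (hxi.trans hqt), if_pos hxi]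
      · have hiA : i ∈ A := Finset.mem_filter.2 ⟨hi, lt_of_not_ge hxi⟩
        have : m ≤ X i ω := Finset.inf'_le _ hiA
        rw [if_neg (by linarith), if_neg hxi]
    · refine ⟨q, ?_, rfl⟩
      have : (∑ i ∈ Finset.range N, if X i ω ≤ q then (1 : ℝ) else 0) = N := by
        rw [Finset.sum_congr rfl fun i hi => if_pos ?_]
        · simp
        · by_contra hx
          exact hAne ⟨i, Finset.mem_filter.2 ⟨hi, lt_of_not_ge hx⟩⟩
      simp only [empCDF, this]
      rw [inv_mul_cancel₀ (by positivity)]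
      exact hα.2.le
  obtain ⟨t, htS, hcnt⟩ := key
  rw [← hcnt]
  have hNpos : (0:ℝ) < N := by exact_mod_cast hN
  simp only [empCDF] at htS
  calc α * N ≤ ((N:ℝ)⁻¹ * ∑ i ∈ Finset.range N, if X i ω ≤ t then (1 : ℝ) else 0) * N := by
        nlinarith
    _ = _ := by field_simp

end Det

section Det2

variable {Ω : Type*} (X : ℕ → Ω → ℝ) (ω : Ω) (N : ℕ) {α : ℝ}

lemma quantile_strict (hN : 0 < N) (hα : α ∈ Set.Ioo (0:ℝ) 1) :
    (∑ i ∈ Finset.range N, if X i ω < sampleQuantile X N α ω then (1 : ℝ) else 0) ≤ α * N := by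
  classical
  set q := sampleQuantile X N α ω with hq
  have hne := quantSet_nonempty X ω N hN hα.2.le
  have hbdd := quantSet_bddBelow X ω N hN hα.1
  set B := (Finset.range N).filter (fun i => X i ω < q) with hB
  by_cases hBne : B.Nonempty
  · set m := B.sup' hBne (fun i => X i ω) with hm
    have hmq : m < q := by
      rw [hm, Finset.sup'_lt_iff]
      intro i hi
      exact (Finset.mem_filter.1 hi).2
    set t := (m + q) / 2 with ht
    have hmt : m < t := by rw [ht]; linarith
    have htq : t < q := by rw [ht]; linarith
    have htnS : ¬ (α ≤ empCDF X N ω t) := by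
      intro hts
      have : q ≤ t := csInf_le hbdd hts
      linarith
    push_neg at htnS
    have hcnt : (∑ i ∈ Finset.range N, if X i ω < q then (1 : ℝ) else 0) =
        ∑ i ∈ Finset.range N, if X i ω ≤ t then (1 : ℝ) else 0 := by
      refine Finset.sum_congr rfl fun i hi => ?_
      by_cases hxi : X i ω < q
      · have hiB : i ∈ B := Finset.mem_filter.2 ⟨hi, hxi⟩
        have : X i ω ≤ m := by rw [hm]; exact Finset.le_sup' (fun i => X i ω) hiB
        rw [if_pos hxi, if_pos (by linarith)]
      · rw [if_neg hxi, if_neg (by push_neg at hxi ⊢; linarith)]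
    rw [hcnt]
    have hNpos : (0:ℝ) < N := by exact_mod_cast hN
    simp only [empCDF] at htnS
    have h2 := mul_lt_mul_of_pos_left htnS hNpos
    rw [← mul_assoc, mul_inv_cancel₀ hNpos.ne', one_mul] at h2
    linarith
  · have : (∑ i ∈ Finset.range N, if X i ω < q then (1 : ℝ) else 0) = 0 := by
      rw [Finset.sum_congr rfl fun i hi => if_neg fun hx => hBne ⟨i, Finset.mem_filter.2 ⟨hi, hx⟩⟩]
      simp
    rw [this]
    exact mul_nonneg hα.1.le (Nat.cast_nonneg N)

lemma sum_max_diff_le {a b : ℝ} (hab : a ≤ b) :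
    ∑ i ∈ Finset.range N, (max (X i ω - a) 0 - max (X i ω - b) 0) ≤
      (b - a) * ∑ i ∈ Finset.range N, ((1:ℝ) - if X i ω ≤ a then 1 else 0) := by
  rw [Finset.mul_sum]
  refine Finset.sum_le_sum fun i _ => ?_
  set x := X i ω
  split_ifs with h
  · rw [max_eq_right (by linarith), max_eq_right (by linarith)]
    linarith
  · push_neg at h
    rcases le_total x b with h2 | h2
    · rw [max_eq_left (by linarith), max_eq_right (by linarith)]
      linarith
    · rw [max_eq_left (by linarith), max_eq_left (by linarith)]
      linarith

lemma le_sum_max_diff {a b : ℝ} (hab : a ≤ b) :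
    (b - a) * ∑ i ∈ Finset.range N, (if X i ω < b then (0:ℝ) else 1) ≤
      ∑ i ∈ Finset.range N, (max (X i ω - a) 0 - max (X i ω - b) 0) := by
  rw [Finset.mul_sum]
  refine Finset.sum_le_sum fun i _ => ?_
  set x := X i ω
  split_ifs with h
  · rcases le_total x a with h2 | h2
    · rw [max_eq_right (by linarith), max_eq_right (by linarith)]
      linarith
    · rw [max_eq_left (by linarith), max_eq_right (by linarith)]
      linarith
  · push_neg at h
    rw [max_eq_left (by linarith), max_eq_left (by linarith)]
    linarith

end Det2

section Det3

variable {Ω : Type*} (X : ℕ → Ω → ℝ) (ω : Ω) (N : ℕ) {α : ℝ}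

set_option maxHeartbeats 1000000 in
lemma det_bound (hN : 0 < N) (hα : α ∈ Set.Ioo (0:ℝ) 1) (v e d : ℝ)
    (hqv : |sampleQuantile X N α ω - v| ≤ e)
    (hdv : |(∑ i ∈ Finset.range N, if X i ω ≤ v then (1:ℝ) else 0) - α * N| ≤ d * N) :
    |(sampleQuantile X N α ω +
        ((1 - α) * N)⁻¹ * ∑ i ∈ Finset.range N, max (X i ω - sampleQuantile X N α ω) 0)
      - (v + ((1 - α) * N)⁻¹ * ∑ i ∈ Finset.range N, max (X i ω - v) 0)| ≤ e * d / (1 - α) := by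
  classical
  have hNpos : (0:ℝ) < N := by exact_mod_cast hN
  have h1α : (0:ℝ) < 1 - α := by linarith [hα.2]
  have hden : (0:ℝ) < (1 - α) * N := by positivity
  set q := sampleQuantile X N α ω with hq
  set cq := ∑ i ∈ Finset.range N, if X i ω ≤ q then (1:ℝ) else 0 with hcq
  set cv := ∑ i ∈ Finset.range N, if X i ω ≤ v then (1:ℝ) else 0 with hcv
  set sq := ∑ i ∈ Finset.range N, if X i ω < q then (1:ℝ) else 0 with hsq
  set sv := ∑ i ∈ Finset.range N, if X i ω < v then (1:ℝ) else 0 with hsv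
  set Sq := ∑ i ∈ Finset.range N, max (X i ω - q) 0 with hSq
  set Sv := ∑ i ∈ Finset.range N, max (X i ω - v) 0 with hSv
  have hK : α * N ≤ cq := quantile_mem X ω N hN hα
  have hKs : sq ≤ α * N := quantile_strict X ω N hN hα
  have hsv_le_cv : sv ≤ cv := by
    refine Finset.sum_le_sum fun i _ => ?_
    split_ifs with h1 h2 <;> norm_num
    exact absurd h1.le h2
  have hsq_le_cq : sq ≤ cq := by
    refine Finset.sum_le_sum fun i _ => ?_
    split_ifs with h1 h2 <;> norm_num
    exact absurd h1.le h2
  have hcv_le_N : cv ≤ N := by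
    calc cv ≤ ∑ _i ∈ Finset.range N, (1:ℝ) := Finset.sum_le_sum fun i _ => by split_ifs <;> norm_num
      _ = N := by simp
  have he0 : 0 ≤ e := le_trans (abs_nonneg _) hqv
  have hd0 : 0 ≤ d * N := le_trans (abs_nonneg _) hdv
  have hd0' : 0 ≤ d := nonneg_of_mul_nonneg_right (by linarith : (0:ℝ) ≤ (N:ℝ) * d) hNpos
  have hcv_ub : cv ≤ α * N + d * N := by have := (abs_le.1 hdv).2; linarith
  have hcv_lb : α * N - d * N ≤ cv := by have := (abs_le.1 hdv).1; linarith
  have habs := abs_le.1 hqv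
  set Δ := (q + ((1 - α) * N)⁻¹ * Sq) - (v + ((1 - α) * N)⁻¹ * Sv) with hΔ
  have hΔmul : Δ * ((1 - α) * N) = (q - v) * ((1 - α) * N) + (Sq - Sv) := by
    have hmul : ((1 - α) * N)⁻¹ * ((1 - α) * N) = 1 := inv_mul_cancel₀ hden.ne'
    calc Δ * ((1 - α) * N)
        = (q - v) * ((1 - α) * N) + (((1 - α) * N)⁻¹ * ((1 - α) * N)) * (Sq - Sv) := by
          rw [hΔ]; ring
      _ = (q - v) * ((1 - α) * N) + (Sq - Sv) := by rw [hmul]; ring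
  have key : Δ * ((1 - α) * N) ≤ e * d * N ∧ -(e * d * N) ≤ Δ * ((1 - α) * N) := by
    rcases le_total q v with hc | hc
    · have hUp : Sq - Sv ≤ (v - q) * ((N:ℝ) - cq) := by
        have h1 := sum_max_diff_le X ω N hc
        rw [Finset.sum_sub_distrib] at h1
        have h2 : (∑ i ∈ Finset.range N, ((1:ℝ) - if X i ω ≤ q then 1 else 0)) = (N:ℝ) - cq := by
          rw [Finset.sum_sub_distrib, hcq]; simp
        rw [h2] at h1
        exact h1
      have hLo : (v - q) * ((N:ℝ) - sv) ≤ Sq - Sv := by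
        have h1 := le_sum_max_diff X ω N hc
        rw [Finset.sum_sub_distrib] at h1
        have h2 : (∑ i ∈ Finset.range N, (if X i ω < v then (0:ℝ) else 1)) = (N:ℝ) - sv := by
          have : ∀ i, (if X i ω < v then (0:ℝ) else 1) = 1 - (if X i ω < v then (1:ℝ) else 0) := by
            intro i; split_ifs <;> norm_num
          rw [Finset.sum_congr rfl fun i _ => this i, Finset.sum_sub_distrib, hsv]; simp
        rw [h2] at h1
        exact h1
      constructor
      · rw [hΔmul]
        nlinarith [mul_nonneg (sub_nonneg.2 hc) (sub_nonneg.2 hK), mul_nonneg he0 hd0]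
      · rw [hΔmul]
        have hprod : (v - q) * (sv - α * N) ≤ e * (d * N) := by
          rcases le_total (sv - α * N) 0 with h | h
          · nlinarith
          · have h1 : v - q ≤ e := by linarith [habs.1]
            have h2 : sv - α * N ≤ d * N := by linarith
            nlinarith
        nlinarith
    · have hUp : Sv - Sq ≤ (q - v) * ((N:ℝ) - cv) := by
        have h1 := sum_max_diff_le X ω N hc
        rw [Finset.sum_sub_distrib] at h1
        have h2 : (∑ i ∈ Finset.range N, ((1:ℝ) - if X i ω ≤ v then 1 else 0)) = (N:ℝ) - cv := by
          rw [Finset.sum_sub_distrib, hcv]; simp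
        rw [h2] at h1
        exact h1
      have hLo : (q - v) * ((N:ℝ) - sq) ≤ Sv - Sq := by
        have h1 := le_sum_max_diff X ω N hc
        rw [Finset.sum_sub_distrib] at h1
        have h2 : (∑ i ∈ Finset.range N, (if X i ω < q then (0:ℝ) else 1)) = (N:ℝ) - sq := by
          have : ∀ i, (if X i ω < q then (0:ℝ) else 1) = 1 - (if X i ω < q then (1:ℝ) else 0) := by
            intro i; split_ifs <;> norm_num
          rw [Finset.sum_congr rfl fun i _ => this i, Finset.sum_sub_distrib, hsq]; simp
        rw [h2] at h1
        exact h1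
      constructor
      · rw [hΔmul]
        have hprod : (q - v) * (α * N - cv) ≤ e * (d * N) := by
          rcases le_total (α * N - cv) 0 with h | h
          · nlinarith
          · have h1 : q - v ≤ e := by linarith [habs.2]
            have h2 : α * N - cv ≤ d * N := by linarith
            nlinarith
        nlinarith
      · rw [hΔmul]
        nlinarith [mul_nonneg (sub_nonneg.2 hc) (sub_nonneg.2 hKs), mul_nonneg he0 hd0]
  rw [abs_le]
  constructor
  · rw [neg_le]
    rw [le_div_iff₀ h1α]
    refine le_of_mul_le_mul_right ?_ hNpos
    calc -Δ * (1 - α) * N = -(Δ * ((1 - α) * N)) := by ring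
      _ ≤ e * d * N := by linarith [key.2]
  · rw [le_div_iff₀ h1α]
    refine le_of_mul_le_mul_right ?_ hNpos
    calc Δ * (1 - α) * N = Δ * ((1 - α) * N) := by ring
      _ ≤ e * d * N := key.1

end Det3
section CDF

variable {ν : Measure ℝ} [IsProbabilityMeasure ν] {f : ℝ → ℝ}

lemma Fr_mono (s t : ℝ) (hst : s ≤ t) : (ν (Iic s)).toReal ≤ (ν (Iic t)).toReal :=
  ENNReal.toReal_mono (measure_ne_top _ _) (measure_mono (Iic_subset_Iic.2 hst))

lemma Fr_diff (a b : ℝ) (hab : a ≤ b) :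
    (ν (Ioc a b)).toReal = (ν (Iic b)).toReal - (ν (Iic a)).toReal := by
  have hU : Iic a ∪ Ioc a b = Iic b := Iic_union_Ioc_eq_Iic hab
  have hdisj : Disjoint (Iic a) (Ioc a b) := Iic_disjoint_Ioc le_rfl
  have := measure_union (μ := ν) hdisj measurableSet_Ioc
  rw [hU] at this
  rw [this, ENNReal.toReal_add (measure_ne_top _ _) (measure_ne_top _ _)]
  ring

lemma Fr_incr (hdens : ν = volume.withDensity (fun t => ENNReal.ofReal (f t)))
    {a b c C : ℝ} (hab : a ≤ b) (hc : 0 ≤ c) (hC : 0 ≤ C)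
    (hlb : ∀ t ∈ Ioc a b, c ≤ f t) (hub : ∀ t ∈ Ioc a b, f t ≤ C) :
    c * (b - a) ≤ (ν (Iic b)).toReal - (ν (Iic a)).toReal ∧
      (ν (Iic b)).toReal - (ν (Iic a)).toReal ≤ C * (b - a) := by
  rw [← Fr_diff a b hab]
  have hm : ν (Ioc a b) = ∫⁻ t in Ioc a b, ENNReal.ofReal (f t) := by
    rw [hdens, withDensity_apply _ measurableSet_Ioc]
  have hub' : ν (Ioc a b) ≤ ENNReal.ofReal C * ENNReal.ofReal (b - a) := by
    rw [hm]
    calc ∫⁻ t in Ioc a b, ENNReal.ofReal (f t) ≤ ∫⁻ _t in Ioc a b, ENNReal.ofReal C := by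
          refine lintegral_mono_ae ?_
          filter_upwards [ae_restrict_mem measurableSet_Ioc] with t ht
          exact ENNReal.ofReal_le_ofReal (hub t ht)
      _ = ENNReal.ofReal C * volume (Ioc a b) := by rw [setLIntegral_const]
      _ = ENNReal.ofReal C * ENNReal.ofReal (b - a) := by rw [Real.volume_Ioc]
  have hlb' : ENNReal.ofReal c * ENNReal.ofReal (b - a) ≤ ν (Ioc a b) := by
    rw [hm]
    calc ENNReal.ofReal c * ENNReal.ofReal (b - a) = ∫⁻ _t in Ioc a b, ENNReal.ofReal c := by
          rw [setLIntegral_const, Real.volume_Ioc]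
      _ ≤ ∫⁻ t in Ioc a b, ENNReal.ofReal (f t) := by
          refine lintegral_mono_ae ?_
          filter_upwards [ae_restrict_mem measurableSet_Ioc] with t ht
          exact ENNReal.ofReal_le_ofReal (hlb t ht)
  constructor
  · have := ENNReal.toReal_mono (measure_ne_top _ _) hlb'
    rwa [← ENNReal.ofReal_mul hc, ENNReal.toReal_ofReal (by nlinarith)] at this
  · have := ENNReal.toReal_mono (by finiteness) hub'
    rwa [← ENNReal.ofReal_mul hC, ENNReal.toReal_ofReal (by nlinarith)] at this

lemma quantSetNu_nonempty {α : ℝ} (hα0 : 0 ≤ α) (hα : α < 1) :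
    {t : ℝ | α ≤ (ν (Iic t)).toReal}.Nonempty := by
  have h1 : Tendsto (fun t : ℝ => ν (Iic t)) atTop (nhds (ν univ)) :=
    tendsto_measure_Iic_atTop ν
  rw [measure_univ] at h1
  have h2 : ENNReal.ofReal α < 1 := by
    calc ENNReal.ofReal α < ENNReal.ofReal 1 :=
          (ENNReal.ofReal_lt_ofReal_iff_of_nonneg hα0).2 hα
      _ = 1 := ENNReal.ofReal_one
  obtain ⟨t, ht⟩ := (h1.eventually (eventually_gt_nhds h2)).exists
  exact ⟨t, ((ENNReal.ofReal_lt_iff_lt_toReal hα0 (measure_ne_top _ _)).1 ht).le⟩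

lemma quantSetNu_bddBelow {α : ℝ} (hα0 : 0 < α) :
    BddBelow {t : ℝ | α ≤ (ν (Iic t)).toReal} := by
  have h1 : Tendsto (fun n : ℕ => ν (Iic (-(n:ℝ)))) atTop (nhds 0) := by
    have h0 : ν (⋂ n : ℕ, Iic (-(n:ℝ))) = 0 := by
      have : (⋂ n : ℕ, Iic (-(n:ℝ))) = ∅ := by
        ext x
        simp only [Set.mem_iInter, Set.mem_Iic, Set.mem_empty_iff_false, iff_false, not_forall,
          not_le]
        obtain ⟨n, hn⟩ := exists_nat_gt (-x)
        exact ⟨n, by linarith⟩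
      rw [this, measure_empty]
    have := tendsto_measure_iInter_atTop (μ := ν) (s := fun n : ℕ => Iic (-(n:ℝ)))
      (fun n => measurableSet_Iic.nullMeasurableSet)
      (fun m n hmn => Iic_subset_Iic.2 (by exact_mod_cast neg_le_neg (Nat.cast_le.2 hmn)))
      ⟨0, measure_ne_top _ _⟩
    rwa [h0] at this
  have h2 : (0:ℝ≥0∞) < ENNReal.ofReal α := ENNReal.ofReal_pos.2 hα0
  obtain ⟨n₀, ht₀⟩ := (h1.eventually (eventually_lt_nhds h2)).exists
  set t₀ : ℝ := -(n₀:ℝ) with ht₀def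
  have ht₀' : (ν (Iic t₀)).toReal < α := by
    have := (ENNReal.lt_ofReal_iff_toReal_lt (measure_ne_top _ _)).1 ht₀
    exact this
  refine ⟨t₀, fun s hs => ?_⟩
  by_contra hlt
  push_neg at hlt
  have : (ν (Iic s)).toReal ≤ (ν (Iic t₀)).toReal := Fr_mono s t₀ hlt.le
  exact absurd hs (by simp only [Set.mem_setOf_eq]; push_neg; linarith)

end CDF

section Package

variable {ν : Measure ℝ} [IsProbabilityMeasure ν] {f : ℝ → ℝ} {α vα : ℝ}

lemma cdf_package (hdens : ν = volume.withDensity (fun t => ENNReal.ofReal (f t)))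
    (hα : α ∈ Set.Ioo (0:ℝ) 1)
    (hvα : vα = sInf {t : ℝ | α ≤ (ν (Iic t)).toReal})
    (hf : ∃ ε > 0, ContinuousOn f (Metric.ball vα ε) ∧ ∀ t ∈ Metric.ball vα ε, 0 < f t) :
    ∃ ε₀ > 0, ∃ c > 0,
      (ν (Iic vα)).toReal = α ∧
      (∀ e : ℝ, 0 < e → e ≤ ε₀ → α + c * e ≤ (ν (Iic (vα + e))).toReal) ∧
      (∀ e : ℝ, 0 < e → e ≤ ε₀ → (ν (Iic (vα - e))).toReal ≤ α - c * e) := by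
  obtain ⟨ε, hε, hcont, hpos⟩ := hf
  set ε₀ := ε / 2 with hε₀def
  have hε₀ : 0 < ε₀ := by positivity
  set I := Icc (vα - ε₀) (vα + ε₀) with hI
  have hsub : I ⊆ Metric.ball vα ε := by
    intro t ht
    rw [Metric.mem_ball, Real.dist_eq, abs_sub_lt_iff]
    obtain ⟨h1, h2⟩ := ht
    constructor <;> [linarith; linarith]
  have hIne : vα ∈ I := ⟨by linarith, by linarith⟩
  have hcont' : ContinuousOn f I := hcont.mono hsub
  obtain ⟨x₀, hx₀, hmin⟩ := isCompact_Icc.exists_isMinOn ⟨vα, hIne⟩ hcont'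
  obtain ⟨x₁, hx₁, hmax⟩ := isCompact_Icc.exists_isMaxOn ⟨vα, hIne⟩ hcont'
  set c := f x₀ with hc
  set Cm := f x₁ with hCm
  have hc0 : 0 < c := hpos x₀ (hsub hx₀)
  have hCm0 : 0 < Cm := hpos x₁ (hsub hx₁)
  have hbnd : ∀ a b : ℝ, a ∈ I → b ∈ I → a ≤ b →
      c * (b - a) ≤ (ν (Iic b)).toReal - (ν (Iic a)).toReal ∧
      (ν (Iic b)).toReal - (ν (Iic a)).toReal ≤ Cm * (b - a) := by
    intro a b ha hb hab
    refine Fr_incr hdens hab hc0.le hCm0.le (fun t ht => ?_) (fun t ht => ?_)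
    · exact hmin ⟨by linarith [ha.1, ht.1.le], by linarith [hb.2, ht.2]⟩
    · exact hmax ⟨by linarith [ha.1, ht.1.le], by linarith [hb.2, ht.2]⟩
  have hTne := quantSetNu_nonempty (ν := ν) hα.1.le hα.2
  have hTbdd := quantSetNu_bddBelow (ν := ν) hα.1
  have hFα : (ν (Iic vα)).toReal = α := by
    have hge : α ≤ (ν (Iic vα)).toReal := by
      refine le_of_forall_pos_le_add fun η hη => ?_
      set δ := min (η / Cm) ε₀ with hδdef
      have hδ0 : 0 < δ := lt_min (by positivity) hε₀
      have : sInf {t : ℝ | α ≤ (ν (Iic t)).toReal} < vα + δ := by rw [← hvα]; linarith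
      obtain ⟨t, htT, htlt⟩ := (csInf_lt_iff hTbdd hTne).1 this
      have hvt : vα ≤ t := hvα ▸ csInf_le hTbdd htT
      have htI : t ∈ I := ⟨by linarith, by linarith [min_le_right (η / Cm) ε₀]⟩
      have := (hbnd vα t hIne htI hvt).2
      have hδη : Cm * (t - vα) ≤ η := by
        have h1 : t - vα ≤ η / Cm := by
          have := min_le_left (η / Cm) ε₀
          linarith
        calc Cm * (t - vα) ≤ Cm * (η / Cm) := by nlinarith
          _ = η := by field_simp
      have hαt : α ≤ (ν (Iic t)).toReal := htT
      linarith
    have hle : (ν (Iic vα)).toReal ≤ α := by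
      refine le_of_forall_pos_le_add fun η hη => ?_
      set δ := min (η / Cm) ε₀ with hδdef
      have hδ0 : 0 < δ := lt_min (by positivity) hε₀
      have hnotT : vα - δ ∉ {t : ℝ | α ≤ (ν (Iic t)).toReal} :=
        notMem_of_lt_csInf (by rw [← hvα]; linarith) hTbdd
      have hFlt : (ν (Iic (vα - δ))).toReal < α := by
        by_contra h
        push_neg at h
        exact hnotT h
      have hI1 : vα - δ ∈ I := ⟨by linarith [min_le_right (η / Cm) ε₀], by linarith⟩
      have := (hbnd (vα - δ) vα hI1 hIne (by linarith)).2
      have hδη : Cm * (vα - (vα - δ)) ≤ η := by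
        have h1 : δ ≤ η / Cm := min_le_left _ _
        calc Cm * (vα - (vα - δ)) = Cm * δ := by ring_nf
          _ ≤ Cm * (η / Cm) := by nlinarith
          _ = η := by field_simp
      linarith
    linarith
  refine ⟨ε₀, hε₀, c, hc0, hFα, fun e he0 heε => ?_, fun e he0 heε => ?_⟩
  · have := (hbnd vα (vα + e) hIne ⟨by linarith, by linarith⟩ (by linarith)).1
    have h2 : c * (vα + e - vα) = c * e := by ring_nf
    linarith [hFα ▸ this]
  · have := (hbnd (vα - e) vα ⟨by linarith, by linarith⟩ hIne (by linarith)).1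
    have h2 : c * (vα - (vα - e)) = c * e := by ring_nf
    linarith [hFα ▸ this]

end Package
lemma exp_le_quadratic {s : ℝ} (h0 : 0 ≤ s) (h1 : s ≤ 1) : Real.exp s ≤ 1 + s + s ^ 2 := by
  have hb := Real.exp_bound (x := s) (by rw [abs_of_nonneg h0]; exact h1) (n := 2) (by norm_num)
  have hsum : (∑ i ∈ Finset.range 2, s ^ i / (Nat.factorial i : ℝ)) = 1 + s := by
    simp [Finset.sum_range_succ, Nat.factorial]
  rw [hsum, abs_of_nonneg h0] at hb
  have h2 := (abs_le.1 hb).2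
  norm_num [Nat.factorial] at h2
  nlinarith [h2]

section Chernoff

variable {Ω : Type*} {mΩ : MeasurableSpace Ω} {μ : Measure Ω} [IsProbabilityMeasure μ]
variable {X : ℕ → Ω → ℝ}

open scoped Classical in
lemma chernoff_count (hmeas : ∀ i, Measurable (X i))
    (hindep : iIndepFun X μ)
    (hident : ∀ i, μ.map (X i) = μ.map (X 0))
    (B : Set ℝ) (hB : MeasurableSet B) {p δ : ℝ}
    (hp : p = ((μ.map (X 0)) B).toReal) (hp0 : 0 < p) (hδ : 0 < δ) (hδp : δ ≤ 2 * p)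
    (N : ℕ) :
    μ {ω | p * N + δ * N ≤ ∑ i ∈ Finset.range N, if X i ω ∈ B then (1:ℝ) else 0} ≤
      ENNReal.ofReal (Real.exp (-(N * δ ^ 2) / 4)) := by
  set g : ℝ → ℝ := B.indicator (fun _ => 1) with hg
  have hgmeas : Measurable g := measurable_const.indicator hB
  set Y : ℕ → Ω → ℝ := fun i ω => if X i ω ∈ B then (1:ℝ) else 0 with hY
  have hYg : ∀ i, Y i = g ∘ X i := by
    intro i; funext ω
    simp [hY, hg, Set.indicator_apply]
  have hYmeas : ∀ i, Measurable (Y i) := fun i => (hYg i) ▸ hgmeas.comp (hmeas i)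
  have hYindep : iIndepFun Y μ := by
    have h2 : (fun i => g ∘ X i) = Y := funext fun i => (hYg i).symm
    exact h2 ▸ hindep.comp (fun _ => g) (fun _ => hgmeas)
  have hp1 : p ≤ 1 := by
    rw [hp]
    calc ((μ.map (X 0)) B).toReal ≤ ((μ.map (X 0)) univ).toReal := by
          have : IsProbabilityMeasure (μ.map (X 0)) := Measure.isProbabilityMeasure_map (hmeas 0).aemeasurable
          exact ENNReal.toReal_mono (measure_ne_top _ _) (measure_mono (subset_univ _))
      _ = 1 := by
          have : IsProbabilityMeasure (μ.map (X 0)) := Measure.isProbabilityMeasure_map (hmeas 0).aemeasurable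
          simp
  set s := δ / (2 * p) with hs
  have hs0 : 0 < s := by positivity
  have hs1 : s ≤ 1 := by rw [hs, div_le_one (by positivity)]; exact hδp
  -- each Y i is bounded in [0,1]
  have hYbdd : ∀ i ω, 0 ≤ Y i ω ∧ Y i ω ≤ 1 := by
    intro i ω; simp only [hY]; split_ifs <;> norm_num
  -- sum bounded
  have hSbdd : ∀ ω, (∑ i ∈ Finset.range N, Y i) ω ≤ N := by
    intro ω
    rw [Finset.sum_apply]
    calc ∑ i ∈ Finset.range N, Y i ω ≤ ∑ _i ∈ Finset.range N, (1:ℝ) :=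
          Finset.sum_le_sum fun i _ => (hYbdd i ω).2
      _ = N := by simp
  have hSfun : (∑ i ∈ Finset.range N, Y i) = fun ω => ∑ i ∈ Finset.range N, Y i ω := by
    funext ω; simp [Finset.sum_apply]
  have hSmeas : Measurable (∑ i ∈ Finset.range N, Y i) := by
    rw [hSfun]
    exact Finset.measurable_sum _ (fun i _ => hYmeas i)
  have hint : Integrable (fun ω => Real.exp (s * (∑ i ∈ Finset.range N, Y i) ω)) μ := by
    refine Integrable.mono' (integrable_const (Real.exp (s * N)))
      ((hSmeas.const_mul s).exp.aestronglyMeasurable) ?_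
    filter_upwards with ω
    rw [Real.norm_eq_abs, abs_of_nonneg (Real.exp_nonneg _)]
    exact Real.exp_le_exp.2 (by nlinarith [hSbdd ω])
  -- mgf of each Y i
  have hmgf : ∀ i, mgf (Y i) μ s = (Real.exp s - 1) * p + 1 := by
    intro i
    have hrw : (fun ω => Real.exp (s * Y i ω)) =
        fun ω => (Real.exp s - 1) * (if X i ω ∈ B then (1:ℝ) else 0) + 1 := by
      funext ω
      simp only [hY]
      split_ifs <;> simp
    rw [mgf, hrw]
    have hind : (fun ω => if X i ω ∈ B then (1:ℝ) else 0) =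
        (X i ⁻¹' B).indicator (fun _ => (1:ℝ)) := by
      funext ω; simp [Set.indicator_apply, Set.mem_preimage]
    have hintind : Integrable (fun ω => if X i ω ∈ B then (1:ℝ) else 0) μ := by
      rw [hind]
      exact (integrable_const (1:ℝ)).indicator ((hmeas i) hB)
    rw [integral_add (hintind.const_mul _) (integrable_const 1)]
    rw [integral_const_mul, integral_const]
    have : ∫ ω, (if X i ω ∈ B then (1:ℝ) else 0) ∂μ = p := by
      rw [hind, integral_indicator_const _ ((hmeas i) hB)]
      rw [hp, ← hident i, Measure.map_apply (hmeas i) hB]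
      simp
      rfl
    rw [this]
    simp
  -- Chernoff
  have hcher := measure_ge_le_exp_mul_mgf (X := ∑ i ∈ Finset.range N, Y i) (μ := μ)
    (p * N + δ * N) hs0.le hint
  rw [hYindep.mgf_sum hYmeas (Finset.range N)] at hcher
  have hprod : (∏ i ∈ Finset.range N, mgf (Y i) μ s) = ((Real.exp s - 1) * p + 1) ^ N := by
    rw [Finset.prod_congr rfl fun i _ => hmgf i, Finset.prod_const, Finset.card_range]
  rw [hprod] at hcher
  -- bound the RHS
  have hmgf_le : ((Real.exp s - 1) * p + 1) ^ N ≤ Real.exp (N * (p * (s + s ^ 2))) := by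
    have h1 : (Real.exp s - 1) * p + 1 ≤ Real.exp (p * (Real.exp s - 1)) := by
      have := Real.add_one_le_exp (p * (Real.exp s - 1))
      linarith
    have h2 : Real.exp s - 1 ≤ s + s ^ 2 := by linarith [exp_le_quadratic hs0.le hs1]
    have h3 : (0:ℝ) ≤ (Real.exp s - 1) * p + 1 := by
      nlinarith [Real.add_one_le_exp s]
    calc ((Real.exp s - 1) * p + 1) ^ N ≤ (Real.exp (p * (s + s ^ 2))) ^ N := by
          refine pow_le_pow_left₀ h3 ?_ N
          calc (Real.exp s - 1) * p + 1 ≤ Real.exp (p * (Real.exp s - 1)) := h1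
            _ ≤ Real.exp (p * (s + s ^ 2)) := Real.exp_le_exp.2 (by nlinarith)
      _ = Real.exp (N * (p * (s + s ^ 2))) := by
          rw [← Real.exp_nat_mul]
  have hfinal : Real.exp (-s * (p * N + δ * N)) * ((Real.exp s - 1) * p + 1) ^ N ≤
      Real.exp (-(N * δ ^ 2) / 4) := by
    calc Real.exp (-s * (p * N + δ * N)) * ((Real.exp s - 1) * p + 1) ^ N
        ≤ Real.exp (-s * (p * N + δ * N)) * Real.exp (N * (p * (s + s ^ 2))) := by
          exact mul_le_mul_of_nonneg_left hmgf_le (Real.exp_nonneg _)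
      _ = Real.exp (-s * (p * N + δ * N) + N * (p * (s + s ^ 2))) := by rw [← Real.exp_add]
      _ ≤ Real.exp (-(N * δ ^ 2) / 4) := by
          apply Real.exp_le_exp.2
          have hexp : -s * (p * N + δ * N) + N * (p * (s + s ^ 2)) =
              (N:ℝ) * (p * s ^ 2 - s * δ) := by ring
          rw [hexp]
          have hps : p * s ^ 2 - s * δ = -(δ ^ 2 / (4 * p)) := by
            rw [hs]
            field_simp
            ring
          rw [hps]
          have : δ ^ 2 / 4 ≤ δ ^ 2 / (4 * p) := by
            apply div_le_div_of_nonneg_left (by positivity) (by positivity)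
            nlinarith
          calc (N:ℝ) * -(δ ^ 2 / (4 * p)) = -((N:ℝ) * (δ ^ 2 / (4 * p))) := by ring
            _ ≤ -((N:ℝ) * (δ ^ 2 / 4)) := by
                apply neg_le_neg
                apply mul_le_mul_of_nonneg_left this (Nat.cast_nonneg N)
            _ = -((N:ℝ) * δ ^ 2) / 4 := by ring
  -- conclude
  have hset : {ω | p * N + δ * N ≤ ∑ i ∈ Finset.range N, if X i ω ∈ B then (1:ℝ) else 0} =
      {ω | p * N + δ * N ≤ (∑ i ∈ Finset.range N, Y i) ω} := by
    ext ω
    simp [hY, Finset.sum_apply]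
  rw [hset]
  have hne : μ {ω | p * N + δ * N ≤ (∑ i ∈ Finset.range N, Y i) ω} ≠ ⊤ := measure_ne_top _ _
  rw [← ENNReal.ofReal_toReal hne]
  exact ENNReal.ofReal_le_ofReal (le_trans hcher hfinal)

end Chernoff

lemma exp_neg_le_quadratic {s : ℝ} (h0 : 0 ≤ s) : Real.exp (-s) ≤ 1 - s + s ^ 2 := by
  have hexp : 1 + s ≤ Real.exp s := by linarith [Real.add_one_le_exp s]
  have h1 : Real.exp (-s) * (1 + s) ≤ 1 := by
    calc Real.exp (-s) * (1 + s) ≤ Real.exp (-s) * Real.exp s :=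
          mul_le_mul_of_nonneg_left hexp (Real.exp_nonneg _)
      _ = 1 := by rw [← Real.exp_add]; simp
  nlinarith [Real.exp_pos (-s), pow_nonneg h0 3]

section Chernoff2

variable {Ω : Type*} {mΩ : MeasurableSpace Ω} {μ : Measure Ω} [IsProbabilityMeasure μ]
variable {X : ℕ → Ω → ℝ}

open scoped Classical in
lemma chernoff_count_le (hmeas : ∀ i, Measurable (X i))
    (hindep : iIndepFun X μ)
    (hident : ∀ i, μ.map (X i) = μ.map (X 0))
    (B : Set ℝ) (hB : MeasurableSet B) {p δ : ℝ}
    (hp : p = ((μ.map (X 0)) B).toReal) (hp0 : 0 < p) (hδ : 0 < δ)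
    (N : ℕ) :
    μ {ω | (∑ i ∈ Finset.range N, if X i ω ∈ B then (1:ℝ) else 0) ≤ p * N - δ * N} ≤
      ENNReal.ofReal (Real.exp (-(N * δ ^ 2) / 4)) := by
  set g : ℝ → ℝ := fun x => - B.indicator (fun _ => 1) x with hg
  have hgmeas : Measurable g := (measurable_const.indicator hB).neg
  set Y : ℕ → Ω → ℝ := fun i ω => if X i ω ∈ B then (-1:ℝ) else 0 with hY
  have hYg : ∀ i, Y i = g ∘ X i := by
    intro i; funext ω
    simp only [hY, hg, Function.comp_apply, Set.indicator_apply]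
    split_ifs <;> norm_num
  have hYmeas : ∀ i, Measurable (Y i) := fun i => (hYg i) ▸ hgmeas.comp (hmeas i)
  have hYindep : iIndepFun Y μ := by
    have h2 : (fun i => g ∘ X i) = Y := funext fun i => (hYg i).symm
    exact h2 ▸ hindep.comp (fun _ => g) (fun _ => hgmeas)
  have hp1 : p ≤ 1 := by
    rw [hp]
    have : IsProbabilityMeasure (μ.map (X 0)) := Measure.isProbabilityMeasure_map (hmeas 0).aemeasurable
    calc ((μ.map (X 0)) B).toReal ≤ ((μ.map (X 0)) univ).toReal :=
          ENNReal.toReal_mono (measure_ne_top _ _) (measure_mono (subset_univ _))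
      _ = 1 := by simp
  set s := δ / (2 * p) with hs
  have hs0 : 0 < s := by positivity
  have hYbdd : ∀ i ω, -1 ≤ Y i ω ∧ Y i ω ≤ 0 := by
    intro i ω; simp only [hY]; split_ifs <;> norm_num
  have hSfun : (∑ i ∈ Finset.range N, Y i) = fun ω => ∑ i ∈ Finset.range N, Y i ω := by
    funext ω; simp [Finset.sum_apply]
  have hSbdd : ∀ ω, (∑ i ∈ Finset.range N, Y i) ω ≤ 0 := by
    intro ω
    rw [Finset.sum_apply]
    calc ∑ i ∈ Finset.range N, Y i ω ≤ ∑ _i ∈ Finset.range N, (0:ℝ) :=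
          Finset.sum_le_sum fun i _ => (hYbdd i ω).2
      _ = 0 := by simp
  have hSmeas : Measurable (∑ i ∈ Finset.range N, Y i) := by
    rw [hSfun]
    exact Finset.measurable_sum _ (fun i _ => hYmeas i)
  have hint : Integrable (fun ω => Real.exp (s * (∑ i ∈ Finset.range N, Y i) ω)) μ := by
    refine Integrable.mono' (integrable_const (Real.exp (s * 0)))
      ((hSmeas.const_mul s).exp.aestronglyMeasurable) ?_
    filter_upwards with ω
    rw [Real.norm_eq_abs, abs_of_nonneg (Real.exp_nonneg _)]
    exact Real.exp_le_exp.2 (by nlinarith [hSbdd ω])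
  have hmgf : ∀ i, mgf (Y i) μ s = (Real.exp (-s) - 1) * p + 1 := by
    intro i
    have hrw : (fun ω => Real.exp (s * Y i ω)) =
        fun ω => (Real.exp (-s) - 1) * (if X i ω ∈ B then (1:ℝ) else 0) + 1 := by
      funext ω
      simp only [hY]
      split_ifs <;> simp [mul_neg, mul_one]
    rw [mgf, hrw]
    have hind : (fun ω => if X i ω ∈ B then (1:ℝ) else 0) =
        (X i ⁻¹' B).indicator (fun _ => (1:ℝ)) := by
      funext ω; simp [Set.indicator_apply, Set.mem_preimage]
    have hintind : Integrable (fun ω => if X i ω ∈ B then (1:ℝ) else 0) μ := by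
      rw [hind]
      exact (integrable_const (1:ℝ)).indicator ((hmeas i) hB)
    rw [integral_add (hintind.const_mul _) (integrable_const 1)]
    rw [integral_const_mul, integral_const]
    have : ∫ ω, (if X i ω ∈ B then (1:ℝ) else 0) ∂μ = p := by
      rw [hind, integral_indicator_const _ ((hmeas i) hB)]
      rw [hp, ← hident i, Measure.map_apply (hmeas i) hB]
      simp
      rfl
    rw [this]
    simp
  have hcher := measure_ge_le_exp_mul_mgf (X := ∑ i ∈ Finset.range N, Y i) (μ := μ)
    (-(p * N) + δ * N) hs0.le hint
  rw [hYindep.mgf_sum hYmeas (Finset.range N)] at hcher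
  have hprod : (∏ i ∈ Finset.range N, mgf (Y i) μ s) = ((Real.exp (-s) - 1) * p + 1) ^ N := by
    rw [Finset.prod_congr rfl fun i _ => hmgf i, Finset.prod_const, Finset.card_range]
  rw [hprod] at hcher
  have hq : Real.exp (-s) ≤ 1 - s + s ^ 2 := exp_neg_le_quadratic hs0.le
  have hmgf_le : ((Real.exp (-s) - 1) * p + 1) ^ N ≤ Real.exp (N * (p * (-s + s ^ 2))) := by
    have h1 : (Real.exp (-s) - 1) * p + 1 ≤ Real.exp (p * (Real.exp (-s) - 1)) := by
      have := Real.add_one_le_exp (p * (Real.exp (-s) - 1))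
      linarith
    have h3 : (0:ℝ) ≤ (Real.exp (-s) - 1) * p + 1 := by
      nlinarith [mul_nonneg (Real.exp_nonneg (-s)) hp0.le]
    calc ((Real.exp (-s) - 1) * p + 1) ^ N ≤ (Real.exp (p * (-s + s ^ 2))) ^ N := by
          refine pow_le_pow_left₀ h3 ?_ N
          calc (Real.exp (-s) - 1) * p + 1 ≤ Real.exp (p * (Real.exp (-s) - 1)) := h1
            _ ≤ Real.exp (p * (-s + s ^ 2)) := Real.exp_le_exp.2 (by nlinarith)
      _ = Real.exp (N * (p * (-s + s ^ 2))) := by rw [← Real.exp_nat_mul]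
  have hfinal : Real.exp (-s * (-(p * N) + δ * N)) * ((Real.exp (-s) - 1) * p + 1) ^ N ≤
      Real.exp (-(N * δ ^ 2) / 4) := by
    calc Real.exp (-s * (-(p * N) + δ * N)) * ((Real.exp (-s) - 1) * p + 1) ^ N
        ≤ Real.exp (-s * (-(p * N) + δ * N)) * Real.exp (N * (p * (-s + s ^ 2))) :=
          mul_le_mul_of_nonneg_left hmgf_le (Real.exp_nonneg _)
      _ = Real.exp (-s * (-(p * N) + δ * N) + N * (p * (-s + s ^ 2))) := by rw [← Real.exp_add]
      _ ≤ Real.exp (-(N * δ ^ 2) / 4) := by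
          apply Real.exp_le_exp.2
          have hexp : -s * (-(p * N) + δ * N) + N * (p * (-s + s ^ 2)) =
              (N:ℝ) * (p * s ^ 2 - s * δ) := by ring
          rw [hexp]
          have hps : p * s ^ 2 - s * δ = -(δ ^ 2 / (4 * p)) := by
            rw [hs]
            field_simp
            ring
          rw [hps]
          have h4 : δ ^ 2 / 4 ≤ δ ^ 2 / (4 * p) := by
            apply div_le_div_of_nonneg_left (by positivity) (by positivity)
            nlinarith
          calc (N:ℝ) * -(δ ^ 2 / (4 * p)) = -((N:ℝ) * (δ ^ 2 / (4 * p))) := by ring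
            _ ≤ -((N:ℝ) * (δ ^ 2 / 4)) := by
                apply neg_le_neg
                exact mul_le_mul_of_nonneg_left h4 (Nat.cast_nonneg N)
            _ = -((N:ℝ) * δ ^ 2) / 4 := by ring
  have hset : {ω | (∑ i ∈ Finset.range N, if X i ω ∈ B then (1:ℝ) else 0) ≤ p * N - δ * N} =
      {ω | -(p * N) + δ * N ≤ (∑ i ∈ Finset.range N, Y i) ω} := by
    ext ω
    have hsumy : (∑ i ∈ Finset.range N, Y i) ω =
        -(∑ i ∈ Finset.range N, if X i ω ∈ B then (1:ℝ) else 0) := by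
      rw [Finset.sum_apply, ← Finset.sum_neg_distrib]
      refine Finset.sum_congr rfl fun i _ => ?_
      simp only [hY]
      split_ifs <;> norm_num
    simp only [Set.mem_setOf_eq, hsumy]
    constructor <;> intro h <;> linarith
  rw [hset]
  have hne : μ {ω | -(p * N) + δ * N ≤ (∑ i ∈ Finset.range N, Y i) ω} ≠ ⊤ := measure_ne_top _ _
  rw [← ENNReal.ofReal_toReal hne]
  exact ENNReal.ofReal_le_ofReal (le_trans hcher hfinal)

end Chernoff2

set_option maxHeartbeats 2000000 in
/-- Asymptotic representation of the empirical CVaR estimator: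
`ĉ_α^N − c_α = ((1/N) Σ [v_α + (1/(1−α))(X_i − v_α)⁺] − c_α) + O_{a.s.}(N⁻¹ log N)`. -/
theorem empiricalCVaR_representation {Ω : Type*} {mΩ : MeasurableSpace Ω}
    (μ : Measure Ω) [IsProbabilityMeasure μ]
    (X : ℕ → Ω → ℝ) (hmeas : ∀ i, Measurable (X i))
    (hindep : iIndepFun X μ)
    (hident : ∀ i, μ.map (X i) = μ.map (X 0))
    (hsq : Integrable (fun ω => (X 0 ω) ^ 2) μ)
    (f : ℝ → ℝ)
    (hdens : μ.map (X 0) = volume.withDensity (fun t => ENNReal.ofReal (f t)))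
    (α : ℝ) (hα : α ∈ Set.Ioo (0 : ℝ) 1)
    (vα : ℝ) (hvα : vα = sInf {t : ℝ | α ≤ ((μ.map (X 0)) (Set.Iic t)).toReal})
    (hf : ∃ ε > 0, ContinuousOn f (Metric.ball vα ε) ∧ ∀ t ∈ Metric.ball vα ε, 0 < f t)
    (cα : ℝ) (hcα : cα = vα + (1 - α)⁻¹ * ∫ ω, max (X 0 ω - vα) 0 ∂μ) :
    ∃ C : ℝ, ∀ᵐ ω ∂μ, ∀ᶠ N : ℕ in atTop,
      |(sampleQuantile X N α ω +
          ((1 - α) * N)⁻¹ * ∑ i ∈ Finset.range N, max (X i ω - sampleQuantile X N α ω) 0 - cα)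
        - ((N : ℝ)⁻¹ * ∑ i ∈ Finset.range N, (vα + (1 - α)⁻¹ * max (X i ω - vα) 0) - cα)| ≤
        C * Real.log N / N := by
  classical
  have hα0 := hα.1
  have hα1 := hα.2
  have h1α : (0:ℝ) < 1 - α := by linarith
  haveI hprob : IsProbabilityMeasure (μ.map (X 0)) :=
    Measure.isProbabilityMeasure_map (hmeas 0).aemeasurable
  obtain ⟨ε₀, hε₀, c, hc, hFα, hgrowp, hgrowm⟩ :=
    cdf_package (ν := μ.map (X 0)) hdens hα hvα hf
  set dl : ℕ → ℝ := fun N => Real.sqrt (12 * Real.log N / N) with hdl_def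
  set el : ℕ → ℝ := fun N => (Real.sqrt 12 / c) * Real.sqrt (Real.log N / N) with hel_def
  -- tendsto facts
  have hLdiv : Tendsto (fun N : ℕ => Real.log N / N) atTop (nhds 0) := by
    have h1 : Tendsto (fun x : ℝ => Real.log x / x) atTop (nhds 0) := by
      have := Real.tendsto_pow_log_div_mul_add_atTop 1 0 1 one_ne_zero
      simpa using this
    exact h1.comp tendsto_natCast_atTop_atTop
  have hsqrt0 : Tendsto (fun N : ℕ => Real.sqrt (Real.log N / N)) atTop (nhds 0) := by
    have h := (Real.continuous_sqrt.tendsto 0).comp hLdiv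
    simp only [Function.comp_def, Real.sqrt_zero] at h
    exact h
  have hdl0 : Tendsto dl atTop (nhds 0) := by
    have h2 : Tendsto (fun N : ℕ => 12 * (Real.log N / N)) atTop (nhds 0) := by
      simpa using hLdiv.const_mul (12:ℝ)
    have := (Real.continuous_sqrt.tendsto 0).comp h2
    simp only [Function.comp_def, Real.sqrt_zero] at this
    convert this using 2 with N
    rw [hdl_def]
    congr 1
    ring
  have hel0 : Tendsto el atTop (nhds 0) := by
    have := hsqrt0.const_mul (Real.sqrt 12 / c)
    simpa [hel_def] using this
  set cond : ℕ → Prop := fun N => 2 ≤ N ∧ dl N ≤ 2 * α ∧ el N ≤ ε₀ with hcond_def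
  have hcond_ev : ∀ᶠ N in atTop, cond N := by
    have e1 : ∀ᶠ N : ℕ in atTop, 2 ≤ N := eventually_ge_atTop 2
    have e2 : ∀ᶠ N : ℕ in atTop, dl N ≤ 2 * α :=
      hdl0.eventually (eventually_le_nhds (by positivity))
    have e3 : ∀ᶠ N : ℕ in atTop, el N ≤ ε₀ :=
      hel0.eventually (eventually_le_nhds hε₀)
    filter_upwards [e1, e2, e3] with N h1 h2 h3
    exact ⟨h1, h2, h3⟩
  -- events
  set E1 : ℕ → Set Ω := fun N =>
    {ω | α * N + dl N * N ≤ ∑ i ∈ Finset.range N, if X i ω ≤ vα then (1:ℝ) else 0} with hE1_def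
  set E2 : ℕ → Set Ω := fun N =>
    {ω | (∑ i ∈ Finset.range N, if X i ω ≤ vα then (1:ℝ) else 0) ≤ α * N - dl N * N} with hE2_def
  set E3 : ℕ → Set Ω := fun N =>
    {ω | (∑ i ∈ Finset.range N, if X i ω ≤ vα + el N then (1:ℝ) else 0) ≤ α * N} with hE3_def
  set E4 : ℕ → Set Ω := fun N =>
    {ω | (∑ i ∈ Finset.range N, if vα - el N < X i ω then (1:ℝ) else 0) ≤ (1 - α) * N} with hE4_def
  -- basic positivity for N ≥ 2
  have hlogpos : ∀ N : ℕ, 2 ≤ N → 0 < Real.log N := by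
    intro N hN
    apply Real.log_pos
    have h1 : (1:ℕ) < N := lt_of_lt_of_le one_lt_two hN
    exact_mod_cast h1
  have hdlpos : ∀ N : ℕ, 2 ≤ N → 0 < dl N := by
    intro N hN
    have hNpos : (0:ℝ) < N := by positivity
    exact Real.sqrt_pos.2
      (div_pos (by linarith [hlogpos N hN] : (0:ℝ) < 12 * Real.log N) hNpos)
  have helpos : ∀ N : ℕ, 2 ≤ N → 0 < el N := by
    intro N hN
    have hNpos : (0:ℝ) < N := by positivity
    exact mul_pos (div_pos (Real.sqrt_pos.2 (by norm_num)) hc)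
      (Real.sqrt_pos.2 (div_pos (hlogpos N hN) hNpos))
  have hdlsq : ∀ N : ℕ, 2 ≤ N → (dl N) ^ 2 = 12 * Real.log N / N := by
    intro N hN
    have hNpos : (0:ℝ) < N := by positivity
    exact Real.sq_sqrt (by positivity)
  have hcelsq : ∀ N : ℕ, 2 ≤ N → (c * el N) ^ 2 = 12 * Real.log N / N := by
    intro N hN
    have hNpos : (0:ℝ) < N := by positivity
    have h1 : c * el N = Real.sqrt 12 * Real.sqrt (Real.log N / N) := by
      rw [hel_def]
      field_simp
    rw [h1, mul_pow, Real.sq_sqrt (by norm_num : (12:ℝ) ≥ 0),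
      Real.sq_sqrt (le_of_lt (div_pos (hlogpos N hN) hNpos))]
    ring
  have hexp_eq : ∀ N : ℕ, 2 ≤ N → Real.exp (-((N:ℝ) * (dl N) ^ 2) / 4) = ((N:ℝ) ^ 3)⁻¹ := by
    intro N hN
    have hNpos : (0:ℝ) < N := by positivity
    rw [hdlsq N hN]
    have h1 : -((N:ℝ) * (12 * Real.log N / N)) / 4 = -(3 * Real.log N) := by
      field_simp
      ring
    rw [h1, Real.exp_neg]
    congr 1
    rw [show (3:ℝ) * Real.log N = (3:ℕ) * Real.log N by norm_num, Real.exp_nat_mul,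
      Real.exp_log hNpos]
  have hIoi : ∀ t : ℝ, ((μ.map (X 0)) (Ioi t)).toReal = 1 - ((μ.map (X 0)) (Iic t)).toReal := by
    intro t
    have h1 : (Ioi t) = (Iic t)ᶜ := compl_Iic.symm
    rw [h1, measure_compl measurableSet_Iic (measure_ne_top _ _), measure_univ]
    rw [ENNReal.toReal_sub_of_le (by exact prob_le_one) (by norm_num)]
    simp
  -- Chernoff bounds on the four events
  have hbnd1 : ∀ N, cond N → μ (E1 N) ≤ ENNReal.ofReal (((N:ℝ) ^ 3)⁻¹) := by
    intro N hcN
    have hsum_eq : ∀ ω : Ω, (∑ i ∈ Finset.range N, if X i ω ≤ vα then (1:ℝ) else 0) =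
        ∑ i ∈ Finset.range N, if X i ω ∈ Iic vα then (1:ℝ) else 0 :=
      fun ω => Finset.sum_congr rfl fun i _ => by
        by_cases h : X i ω ≤ vα <;> simp [h, Set.mem_Iic]
    have hset : E1 N =
        {ω | α * N + dl N * N ≤ ∑ i ∈ Finset.range N, if X i ω ∈ Iic vα then (1:ℝ) else 0} := by
      ext ω
      simp only [hE1_def, Set.mem_setOf_eq, hsum_eq ω]
    rw [hset]
    refine le_trans (chernoff_count hmeas hindep hident (Iic vα) measurableSet_Iic
      hFα.symm hα0 (hdlpos N hcN.1) hcN.2.1 N) (le_of_eq ?_)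
    rw [hexp_eq N hcN.1]
  have hbnd2 : ∀ N, cond N → μ (E2 N) ≤ ENNReal.ofReal (((N:ℝ) ^ 3)⁻¹) := by
    intro N hcN
    have hsum_eq : ∀ ω : Ω, (∑ i ∈ Finset.range N, if X i ω ≤ vα then (1:ℝ) else 0) =
        ∑ i ∈ Finset.range N, if X i ω ∈ Iic vα then (1:ℝ) else 0 :=
      fun ω => Finset.sum_congr rfl fun i _ => by
        by_cases h : X i ω ≤ vα <;> simp [h, Set.mem_Iic]
    have hset : E2 N =
        {ω | (∑ i ∈ Finset.range N, if X i ω ∈ Iic vα then (1:ℝ) else 0) ≤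
          α * N - dl N * N} := by
      ext ω
      simp only [hE2_def, Set.mem_setOf_eq, hsum_eq ω]
    rw [hset]
    refine le_trans (chernoff_count_le hmeas hindep hident (Iic vα) measurableSet_Iic
      hFα.symm hα0 (hdlpos N hcN.1) N) (le_of_eq ?_)
    rw [hexp_eq N hcN.1]
  have hbnd3 : ∀ N, cond N → μ (E3 N) ≤ ENNReal.ofReal (((N:ℝ) ^ 3)⁻¹) := by
    intro N hcN
    set p3 := ((μ.map (X 0)) (Iic (vα + el N))).toReal with hp3_def
    have hel_pos := helpos N hcN.1
    have hgrow := hgrowp (el N) hel_pos hcN.2.2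
    have hcel_pos : 0 < c * el N := mul_pos hc hel_pos
    have hp3_pos : 0 < p3 := by rw [hp3_def]; linarith
    have hδ3_pos : 0 < p3 - α := by rw [hp3_def]; linarith
    have hsum_eq : ∀ ω : Ω, (∑ i ∈ Finset.range N, if X i ω ≤ vα + el N then (1:ℝ) else 0) =
        ∑ i ∈ Finset.range N, if X i ω ∈ Iic (vα + el N) then (1:ℝ) else 0 :=
      fun ω => Finset.sum_congr rfl fun i _ => by
        by_cases h : X i ω ≤ vα + el N <;> simp [h, Set.mem_Iic]
    have hset : E3 N =
        {ω | (∑ i ∈ Finset.range N, if X i ω ∈ Iic (vα + el N) then (1:ℝ) else 0) ≤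
          p3 * N - (p3 - α) * N} := by
      ext ω
      have : p3 * N - (p3 - α) * N = α * N := by ring
      simp only [hE3_def, Set.mem_setOf_eq, hsum_eq ω, this]
    rw [hset]
    refine le_trans (chernoff_count_le hmeas hindep hident (Iic (vα + el N)) measurableSet_Iic
      rfl hp3_pos hδ3_pos N) ?_
    apply ENNReal.ofReal_le_ofReal
    rw [← hexp_eq N hcN.1]
    apply Real.exp_le_exp.2
    have hsqle : (dl N) ^ 2 ≤ (p3 - α) ^ 2 := by
      rw [hdlsq N hcN.1, ← hcelsq N hcN.1]
      apply pow_le_pow_left₀ hcel_pos.le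
      rw [hp3_def]; linarith
    have hN0 : (0:ℝ) ≤ N := Nat.cast_nonneg N
    nlinarith [mul_le_mul_of_nonneg_left hsqle hN0]
  have hbnd4 : ∀ N, cond N → μ (E4 N) ≤ ENNReal.ofReal (((N:ℝ) ^ 3)⁻¹) := by
    intro N hcN
    set p4 := ((μ.map (X 0)) (Ioi (vα - el N))).toReal with hp4_def
    have hel_pos := helpos N hcN.1
    have hgrow := hgrowm (el N) hel_pos hcN.2.2
    have hcel_pos : 0 < c * el N := mul_pos hc hel_pos
    have hp4_eq : p4 = 1 - ((μ.map (X 0)) (Iic (vα - el N))).toReal := hIoi _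
    have hp4_pos : 0 < p4 := by rw [hp4_eq]; linarith
    have hδ4_pos : 0 < p4 - (1 - α) := by rw [hp4_eq]; linarith
    have hsum_eq : ∀ ω : Ω, (∑ i ∈ Finset.range N, if vα - el N < X i ω then (1:ℝ) else 0) =
        ∑ i ∈ Finset.range N, if X i ω ∈ Ioi (vα - el N) then (1:ℝ) else 0 :=
      fun ω => Finset.sum_congr rfl fun i _ => by
        by_cases h : vα - el N < X i ω <;> simp [h, Set.mem_Ioi]
    have hset : E4 N =
        {ω | (∑ i ∈ Finset.range N, if X i ω ∈ Ioi (vα - el N) then (1:ℝ) else 0) ≤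
          p4 * N - (p4 - (1 - α)) * N} := by
      ext ω
      have : p4 * N - (p4 - (1 - α)) * N = (1 - α) * N := by ring
      simp only [hE4_def, Set.mem_setOf_eq, hsum_eq ω, this]
    rw [hset]
    refine le_trans (chernoff_count_le hmeas hindep hident (Ioi (vα - el N)) measurableSet_Ioi
      rfl hp4_pos hδ4_pos N) ?_
    apply ENNReal.ofReal_le_ofReal
    rw [← hexp_eq N hcN.1]
    apply Real.exp_le_exp.2
    have hsqle : (dl N) ^ 2 ≤ (p4 - (1 - α)) ^ 2 := by
      rw [hdlsq N hcN.1, ← hcelsq N hcN.1]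
      apply pow_le_pow_left₀ hcel_pos.le
      rw [hp4_eq]; linarith
    have hN0 : (0:ℝ) ≤ N := Nat.cast_nonneg N
    nlinarith [mul_le_mul_of_nonneg_left hsqle hN0]
  -- combined exceptional set
  set Sp : ℕ → Set Ω := fun N => if cond N then E1 N ∪ E2 N ∪ E3 N ∪ E4 N else ∅ with hSp_def
  have hSp_bound : ∀ N, μ (Sp N) ≤ ENNReal.ofReal (4 * ((N:ℝ) ^ 3)⁻¹) := by
    intro N
    by_cases hcN : cond N
    · have hSpN : Sp N = E1 N ∪ E2 N ∪ E3 N ∪ E4 N := by rw [hSp_def]; simp only [if_pos hcN]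
      rw [hSpN]
      have hub : μ (E1 N ∪ E2 N ∪ E3 N ∪ E4 N) ≤ μ (E1 N) + μ (E2 N) + μ (E3 N) + μ (E4 N) :=
        calc μ (E1 N ∪ E2 N ∪ E3 N ∪ E4 N) ≤ μ (E1 N ∪ E2 N ∪ E3 N) + μ (E4 N) :=
              measure_union_le _ _
          _ ≤ (μ (E1 N ∪ E2 N) + μ (E3 N)) + μ (E4 N) := by
              gcongr
              exact measure_union_le _ _
          _ ≤ ((μ (E1 N) + μ (E2 N)) + μ (E3 N)) + μ (E4 N) := by
              gcongr
              exact measure_union_le _ _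
      refine le_trans hub ?_
      have h4 : ENNReal.ofReal (((N:ℝ) ^ 3)⁻¹) + ENNReal.ofReal (((N:ℝ) ^ 3)⁻¹) +
          ENNReal.ofReal (((N:ℝ) ^ 3)⁻¹) + ENNReal.ofReal (((N:ℝ) ^ 3)⁻¹) =
          ENNReal.ofReal (4 * ((N:ℝ) ^ 3)⁻¹) := by
        rw [← ENNReal.ofReal_add (by positivity) (by positivity),
          ← ENNReal.ofReal_add (by positivity) (by positivity),
          ← ENNReal.ofReal_add (by positivity) (by positivity)]
        ring_nf
      rw [← h4]
      gcongr
      · exact hbnd1 N hcN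
      · exact hbnd2 N hcN
      · exact hbnd3 N hcN
      · exact hbnd4 N hcN
    · rw [hSp_def]
      simp only [if_neg hcN, measure_empty]
      exact zero_le
  have hsumm : Summable (fun N : ℕ => 4 * ((N:ℝ) ^ 3)⁻¹) := by
    have h := (Real.summable_one_div_nat_pow (p := 3)).2 (by norm_num)
    simpa [one_div] using h.mul_left 4
  have hsum_ne_top : (∑' N, μ (Sp N)) ≠ ⊤ := by
    have hle : (∑' N, μ (Sp N)) ≤ ENNReal.ofReal (∑' N : ℕ, 4 * ((N:ℝ) ^ 3)⁻¹) := by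
      rw [ENNReal.ofReal_tsum_of_nonneg (fun N => by positivity) hsumm]
      exact ENNReal.tsum_le_tsum hSp_bound
    exact ne_top_of_le_ne_top ENNReal.ofReal_ne_top hle
  have hBC := MeasureTheory.ae_eventually_notMem hsum_ne_top
  refine ⟨12 / (c * (1 - α)), ?_⟩
  filter_upwards [hBC] with ω hω
  filter_upwards [hω, hcond_ev] with N hωN hcN
  have hN2 : 2 ≤ N := hcN.1
  have hN : 0 < N := by omega
  have hNpos : (0:ℝ) < N := by positivity
  have hNne : (N:ℝ) ≠ 0 := hNpos.ne'
  have hωN' : ω ∉ E1 N ∪ E2 N ∪ E3 N ∪ E4 N := by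
    intro hmem
    exact hωN (by rw [hSp_def]; simp only [if_pos hcN]; exact hmem)
  simp only [Set.mem_union, not_or, hE1_def, hE2_def, hE3_def, hE4_def,
    Set.mem_setOf_eq] at hωN'
  obtain ⟨⟨⟨h1, h2⟩, h3⟩, h4⟩ := hωN'
  push_neg at h1 h2 h3 h4
  -- deviation of empirical cdf at vα
  have hd : |(∑ i ∈ Finset.range N, if X i ω ≤ vα then (1:ℝ) else 0) - α * N| ≤ dl N * N := by
    rw [abs_le]
    constructor <;> [linarith; linarith]
  -- quantile deviation
  have hub : sampleQuantile X N α ω ≤ vα + el N := by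
    have hmem : (vα + el N) ∈ {t : ℝ | α ≤ empCDF X N ω t} := by
      simp only [Set.mem_setOf_eq, empCDF]
      have hstep : α * N ≤ ∑ i ∈ Finset.range N, if X i ω ≤ vα + el N then (1:ℝ) else 0 :=
        h3.le
      calc α = (N:ℝ)⁻¹ * (α * N) := by field_simp
        _ ≤ (N:ℝ)⁻¹ * ∑ i ∈ Finset.range N, if X i ω ≤ vα + el N then (1:ℝ) else 0 := by
            exact mul_le_mul_of_nonneg_left hstep (by positivity)
    exact csInf_le (quantSet_bddBelow X ω N hN hα0) hmem
  have hlb : vα - el N ≤ sampleQuantile X N α ω := by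
    by_contra hlt
    push_neg at hlt
    have hcntI : (∑ i ∈ Finset.range N, if X i ω ≤ vα - el N then (1:ℝ) else 0) < α * N := by
      have hterm : ∀ i, ((if X i ω ≤ vα - el N then (1:ℝ) else 0) +
          if vα - el N < X i ω then (1:ℝ) else 0) = 1 := by
        intro i
        rcases le_or_gt (X i ω) (vα - el N) with h | h
        · rw [if_pos h, if_neg (not_lt.2 h)]; norm_num
        · rw [if_neg (not_le.2 h), if_pos h]; norm_num
      have hsumN : (∑ i ∈ Finset.range N, ((if X i ω ≤ vα - el N then (1:ℝ) else 0) +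
          if vα - el N < X i ω then (1:ℝ) else 0)) = N := by
        rw [Finset.sum_congr rfl fun i _ => hterm i]
        simp
      rw [Finset.sum_add_distrib] at hsumN
      linarith
    obtain ⟨t, htS, htlt⟩ := (csInf_lt_iff (quantSet_bddBelow X ω N hN hα0)
      (quantSet_nonempty X ω N hN hα1.le)).1 hlt
    have hc1 : α * N ≤ ∑ i ∈ Finset.range N, if X i ω ≤ t then (1:ℝ) else 0 := by
      have hαle : α ≤ (N:ℝ)⁻¹ * ∑ i ∈ Finset.range N, if X i ω ≤ t then (1:ℝ) else 0 := htS
      have := mul_le_mul_of_nonneg_left hαle hNpos.le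
      rwa [← mul_assoc, mul_inv_cancel₀ hNne, one_mul, mul_comm (N:ℝ) α] at this
    have hc2 := cnt_mono X ω N htlt.le
    linarith
  have hqv : |sampleQuantile X N α ω - vα| ≤ el N := by
    rw [abs_le]
    constructor <;> [linarith; linarith]
  have hdet := det_bound X ω N hN hα vα (el N) (dl N) hqv hd
  -- rewrite the goal
  have h1αne : (1:ℝ) - α ≠ 0 := h1α.ne'
  have hsum2 : (N:ℝ)⁻¹ * (∑ i ∈ Finset.range N, (vα + (1 - α)⁻¹ * max (X i ω - vα) 0)) =
      vα + ((1 - α) * N)⁻¹ * ∑ i ∈ Finset.range N, max (X i ω - vα) 0 := by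
    rw [Finset.sum_add_distrib, Finset.sum_const, Finset.card_range, nsmul_eq_mul,
      ← Finset.mul_sum]
    field_simp
  have hgoal_eq : (sampleQuantile X N α ω +
        ((1 - α) * N)⁻¹ * ∑ i ∈ Finset.range N, max (X i ω - sampleQuantile X N α ω) 0 - cα)
      - ((N : ℝ)⁻¹ * ∑ i ∈ Finset.range N, (vα + (1 - α)⁻¹ * max (X i ω - vα) 0) - cα) =
      (sampleQuantile X N α ω +
        ((1 - α) * N)⁻¹ * ∑ i ∈ Finset.range N, max (X i ω - sampleQuantile X N α ω) 0)
      - (vα + ((1 - α) * N)⁻¹ * ∑ i ∈ Finset.range N, max (X i ω - vα) 0) := by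
    rw [hsum2]
    ring
  rw [hgoal_eq]
  refine le_trans hdet (le_of_eq ?_)
  have hL0 : (0:ℝ) ≤ Real.log N := (hlogpos N hN2).le
  have h12 : Real.sqrt 12 * Real.sqrt 12 = 12 := Real.mul_self_sqrt (by norm_num)
  have hLN : Real.sqrt (Real.log N / N) * Real.sqrt (Real.log N / N) = Real.log N / N :=
    Real.mul_self_sqrt (by positivity)
  have heq : el N * dl N = 12 / c * (Real.log N / N) := by
    have hdlN : dl N = Real.sqrt 12 * Real.sqrt (Real.log N / N) := by
      rw [hdl_def]
      simp only []
      rw [show (12:ℝ) * Real.log N / N = 12 * (Real.log N / N) by ring,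
        Real.sqrt_mul (by norm_num)]
    have helN : el N = Real.sqrt 12 / c * Real.sqrt (Real.log N / N) := by rw [hel_def]
    rw [hdlN, helN]
    calc Real.sqrt 12 / c * Real.sqrt (Real.log N / N) *
          (Real.sqrt 12 * Real.sqrt (Real.log N / N))
        = (Real.sqrt 12 * Real.sqrt 12) * (Real.sqrt (Real.log N / N) *
          Real.sqrt (Real.log N / N)) / c := by ring
      _ = 12 * (Real.log N / N) / c := by rw [h12, hLN]
      _ = 12 / c * (Real.log N / N) := by ring
  rw [heq, div_eq_mul_inv (12:ℝ) (c * (1 - α)), mul_inv]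
  ring
end

section
/- Let H be a random variable and for each M let Ē_M be a random variable such that the joint density p_M(h,e) of (H, Ē_M) exists with partial derivatives ∂p_M/∂h of all pairs (h,e), dominated as |∂p_M(h,e)/∂h| ≤ g_{1,M}(e) with sup_M ∫ |e|^r g_{1,M}(e) de < ∞ for 0 ≤ r ≤ 4. Let f̃_M be the density of H + Ē_M/√M and f the density of H. If t_M → t, then f̃_M(t_M) → f(t) as M → ∞. -/
open MeasureTheory Filter Set

/-- Convergence of the noisy-response density to the true density (Lemma 1 of Gordy–Juneja):
if `t_M → t`, then `f̃_M(t_M) = ∫ p_M(t_M − e/√M, e) de → f(t) = ∫ p_M(t, e) de`. -/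
theorem noisy_density_tendsto (p dp : ℕ → ℝ → ℝ → ℝ) (g1 : ℕ → ℝ → ℝ) (f : ℝ → ℝ)
    (hmeas : ∀ M, Measurable (Function.uncurry (p M)))
    (hp_nonneg : ∀ M s e, 0 ≤ p M s e)
    (hderiv : ∀ M e s, HasDerivAt (fun u => p M u e) (dp M s e) s)
    (hdom : ∀ M s e, |dp M s e| ≤ g1 M e)
    (hg1_nonneg : ∀ M e, 0 ≤ g1 M e)
    (hg1_int : ∀ M, Integrable (fun e => (1 + |e| ^ 4) * g1 M e) volume)
    (hg1_sup : ∃ C : ℝ, ∀ M : ℕ, ∀ r : ℕ, r ≤ 4 → ∫ e, |e| ^ r * g1 M e ≤ C)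
    (hmarg : ∀ M t, ∫ e, p M t e = f t)
    (t : ℝ) (tM : ℕ → ℝ) (ht : Tendsto tM atTop (nhds t)) :
    Tendsto (fun M : ℕ => ∫ e, p M (tM M - e / Real.sqrt M) e) atTop (nhds (f t)) := by
  obtain ⟨C, hC⟩ := hg1_sup
  have hOne : ∀ e : ℝ, |e| ≤ 1 + |e| ^ 4 := by
    intro e
    nlinarith [abs_nonneg e, sq_nonneg (|e| ^ 2 - 1), sq_nonneg (|e| - 1), sq_nonneg |e|]
  have key : ∀ M : ℕ, 1 ≤ M →
      |(∫ e, p M (tM M - e / Real.sqrt M) e) - f t| ≤ C * |tM M - t| + C / Real.sqrt M := by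
    intro M hM
    have hsqrt : (1 : ℝ) ≤ Real.sqrt M := by
      rw [show (1 : ℝ) = Real.sqrt 1 from Real.sqrt_one.symm]
      exact Real.sqrt_le_sqrt (by exact_mod_cast hM)
    have hsqrt0 : (0 : ℝ) < Real.sqrt M := lt_of_lt_of_le one_pos hsqrt
    set s := tM M with hs
    -- measurability of g1 M
    have hgm : AEStronglyMeasurable (g1 M) volume := by
      have hcont : Continuous (fun e : ℝ => ((1 : ℝ) + |e| ^ 4)⁻¹) := by
        refine (continuous_const.add ((continuous_abs).pow 4)).inv₀ fun e => show (1 : ℝ) + |e| ^ 4 ≠ 0 by positivity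
      have h1 : AEStronglyMeasurable (fun e => ((1 + |e| ^ 4) * g1 M e) * (1 + |e| ^ 4)⁻¹)
          volume := (hg1_int M).aestronglyMeasurable.mul hcont.aestronglyMeasurable
      refine h1.congr (ae_of_all _ fun e => ?_)
      have h4 : (1 : ℝ) + |e| ^ 4 ≠ 0 := by positivity
      field_simp
    have hg1I : Integrable (g1 M) volume := by
      refine (hg1_int M).mono' hgm (ae_of_all _ fun e => ?_)
      rw [Real.norm_eq_abs, abs_of_nonneg (hg1_nonneg M e)]
      nlinarith [hg1_nonneg M e, pow_nonneg (abs_nonneg e) 4]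
    have heg1I : Integrable (fun e => |e| * g1 M e) volume := by
      refine (hg1_int M).mono' (continuous_abs.aestronglyMeasurable.mul hgm)
        (ae_of_all _ fun e => ?_)
      rw [Real.norm_eq_abs, abs_of_nonneg (mul_nonneg (abs_nonneg e) (hg1_nonneg M e))]
      exact mul_le_mul_of_nonneg_right (hOne e) (hg1_nonneg M e)
    have hCg1 : ∫ e, g1 M e ≤ C := by
      have := hC M 0 (by norm_num)
      simpa using this
    have hCeg1 : ∫ e, |e| * g1 M e ≤ C := by
      have := hC M 1 (by norm_num)
      simpa using this
    have hC0 : 0 ≤ C := le_trans (integral_nonneg (hg1_nonneg M)) hCg1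
    -- mean value inequality
    have lip : ∀ e a b : ℝ, |p M a e - p M b e| ≤ g1 M e * |a - b| := by
      intro e a b
      have := Convex.norm_image_sub_le_of_norm_hasDerivWithin_le
        (f := fun u => p M u e) (f' := fun u => dp M u e) (C := g1 M e) (s := Set.univ)
        (fun x _ => (hderiv M e x).hasDerivWithinAt)
        (fun x _ => by rw [Real.norm_eq_abs]; exact hdom M x e)
        convex_univ (mem_univ b) (mem_univ a)
      simpa [Real.norm_eq_abs] using this
    have hqbound : ∀ e : ℝ, |p M (s - e / Real.sqrt M) e - p M t e|
        ≤ g1 M e * (|s - t| + |e| / Real.sqrt M) := by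
      intro e
      refine (lip e _ _).trans ?_
      refine mul_le_mul_of_nonneg_left ?_ (hg1_nonneg M e)
      have h1 : s - e / Real.sqrt M - t = (s - t) + (-(e / Real.sqrt M)) := by ring
      rw [h1]
      refine (abs_add_le _ _).trans ?_
      rw [abs_neg, abs_div, abs_of_nonneg (Real.sqrt_nonneg _)]
    -- measurability
    have hmA : AEStronglyMeasurable (fun e => p M (s - e / Real.sqrt M) e) volume :=
      ((hmeas M).comp ((measurable_const.sub (measurable_id.div_const _)).prodMk
        measurable_id)).aestronglyMeasurable
    have hmB : AEStronglyMeasurable (fun e => p M t e) volume :=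
      ((hmeas M).comp (measurable_const.prodMk measurable_id)).aestronglyMeasurable
    -- integrability of the difference
    have hqI : Integrable (fun e => p M (s - e / Real.sqrt M) e - p M t e) volume := by
      refine ((hg1_int M).const_mul (|s - t| + 1)).mono' (hmA.sub hmB)
        (ae_of_all _ fun e => ?_)
      rw [Real.norm_eq_abs]
      refine (hqbound e).trans ?_
      have h1 : |e| / Real.sqrt M ≤ |e| := div_le_self (abs_nonneg e) hsqrt
      nlinarith [hg1_nonneg M e, hOne e, abs_nonneg (s - t),
        pow_nonneg (abs_nonneg e) 4,
        mul_nonneg (abs_nonneg (s - t)) (pow_nonneg (abs_nonneg e) 4),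
        mul_le_mul_of_nonneg_left (h1.trans (hOne e)) (hg1_nonneg M e)]
    -- bound the integral of the difference
    have hIq : |∫ e, (p M (s - e / Real.sqrt M) e - p M t e)| ≤ C * |s - t| + C / Real.sqrt M := by
      have habs : |∫ e, (p M (s - e / Real.sqrt M) e - p M t e)|
          ≤ ∫ e, |p M (s - e / Real.sqrt M) e - p M t e| := by
        simpa [Real.norm_eq_abs] using
          norm_integral_le_integral_norm (fun e => p M (s - e / Real.sqrt M) e - p M t e)
      refine habs.trans ?_
      have h2 : ∫ e, |p M (s - e / Real.sqrt M) e - p M t e|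
          ≤ ∫ e, (|s - t| * g1 M e + (1 / Real.sqrt M) * (|e| * g1 M e)) := by
        refine integral_mono hqI.abs ((hg1I.const_mul _).add (heg1I.const_mul _))
          (fun e => (hqbound e).trans_eq (by ring))
      refine h2.trans ?_
      rw [integral_add (hg1I.const_mul _) (heg1I.const_mul _), integral_const_mul,
        integral_const_mul]
      have h3 : |s - t| * ∫ e, g1 M e ≤ |s - t| * C :=
        mul_le_mul_of_nonneg_left hCg1 (abs_nonneg _)
      have h4 : (1 / Real.sqrt M) * ∫ e, |e| * g1 M e ≤ (1 / Real.sqrt M) * C :=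
        mul_le_mul_of_nonneg_left hCeg1 (by positivity)
      have : (1 / Real.sqrt M) * C = C / Real.sqrt M := by ring
      linarith [h3, h4, this.le, this.ge]
    by_cases hPt : Integrable (fun e => p M t e) volume
    · have heq : (∫ e, p M (s - e / Real.sqrt M) e)
          = (∫ e, (p M (s - e / Real.sqrt M) e - p M t e)) + f t := by
        rw [← hmarg M t, ← integral_add hqI hPt]
        simp
      rw [heq]
      simpa using hIq
    · have hPs : ¬ Integrable (fun e => p M (s - e / Real.sqrt M) e) volume := by
        intro h
        exact hPt ((h.sub hqI).congr (ae_of_all _ fun e => by simp))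
      rw [integral_undef hPs, ← hmarg M t, integral_undef hPt]
      simp only [sub_zero, abs_zero]
      exact add_nonneg (mul_nonneg hC0 (abs_nonneg _)) (div_nonneg hC0 (Real.sqrt_nonneg _))
  -- conclude by squeezing
  have hb : Tendsto (fun M : ℕ => C * |tM M - t| + C / Real.sqrt M) atTop (nhds 0) := by
    have h1 : Tendsto (fun M : ℕ => C * |tM M - t|) atTop (nhds 0) := by
      have h0 : Tendsto (fun M : ℕ => |tM M - t|) atTop (nhds 0) := by
        simpa using (tendsto_sub_nhds_zero_iff.mpr ht).abs
      simpa using h0.const_mul C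
    have hsqtop : Tendsto Real.sqrt atTop atTop := by
      refine tendsto_atTop_atTop.mpr fun b => ⟨b ^ 2, fun a ha => ?_⟩
      calc b ≤ |b| := le_abs_self b
        _ = Real.sqrt (b ^ 2) := (Real.sqrt_sq_eq_abs b).symm
        _ ≤ Real.sqrt a := Real.sqrt_le_sqrt ha
    have h2 : Tendsto (fun M : ℕ => C / Real.sqrt M) atTop (nhds 0) :=
      tendsto_const_nhds.div_atTop (hsqtop.comp tendsto_natCast_atTop_atTop)
    simpa using h1.add h2
  have hsq : Tendsto (fun M : ℕ => (∫ e, p M (tM M - e / Real.sqrt M) e) - f t) atTop (nhds 0) := by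
    refine squeeze_zero_norm' ?_ hb
    filter_upwards [eventually_ge_atTop 1] with M hM
    simpa [Real.norm_eq_abs] using key M hM
  exact tendsto_sub_nhds_zero_iff.mp hsq
end

section
/- Fix N and distinct values H(θ₁),...,H(θ_N), where each Ĥ_M(θ_i) → H(θ_i) almost surely as M → ∞ and, conditionally on θ_i, √M(Ĥ_M(θ_i) − H(θ_i)) converges in distribution to N(0, τ_i²). Then √M(Ĥ_M(θ^{(⌈αN⌉)}) − H(θ_{(⌈αN⌉)})) converges in distribution to N(0, τ_{(⌈αN⌉)}²), where θ^{(k)} is the scenario achieving the k-th smallest noisy value and θ_{(k)} the scenario achieving the k-th smallest true value. -/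
open MeasureTheory ProbabilityTheory Filter Set

lemma sort_eq_of_close {N : ℕ} (a f : Fin N → ℝ) (hdist : Function.Injective a) (ε : ℝ)
    (hgap : ∀ i j, a i ≠ a j → ε ≤ |a i - a j|)
    (hclose : ∀ i, |f i - a i| < ε / 2) :
    Tuple.sort f = Tuple.sort a := by
  have hmono : StrictMono (f ∘ Tuple.sort a) := by
    intro i j hij
    have h1 : a (Tuple.sort a i) < a (Tuple.sort a j) := by
      refine lt_of_le_of_ne (Tuple.monotone_sort a hij.le) fun h => ?_
      exact absurd ((Tuple.sort a).injective (hdist h)) hij.ne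
    have h2 : ε ≤ |a (Tuple.sort a i) - a (Tuple.sort a j)| := hgap _ _ h1.ne
    have h3 := hclose (Tuple.sort a i)
    have h4 := hclose (Tuple.sort a j)
    rw [abs_sub_lt_iff] at h3 h4
    rw [abs_sub_comm, abs_of_pos (by linarith)] at h2
    simp only [Function.comp_apply]
    linarith
  symm
  rw [Tuple.eq_sort_iff]
  exact ⟨hmono.monotone, fun i j hij hf => absurd hf (hmono hij).ne⟩

lemma gap_exists {N : ℕ} (a : Fin N → ℝ) :
    ∃ ε > 0, ∀ i j, a i ≠ a j → ε ≤ |a i - a j| := by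
  classical
  set S : Finset ℝ := Finset.image (fun p : Fin N × Fin N => |a p.1 - a p.2|)
    ((Finset.univ ×ˢ Finset.univ).filter fun p => a p.1 ≠ a p.2) with hS
  by_cases h : S.Nonempty
  · refine ⟨S.min' h, ?_, fun i j hij => ?_⟩
    · obtain ⟨x, hx⟩ := Finset.mem_image.1 (S.min'_mem h)
      have := Finset.mem_filter.1 hx.1
      rw [← hx.2]
      exact abs_pos.2 (sub_ne_zero.2 this.2)
    · exact Finset.min'_le _ _ (Finset.mem_image.2 ⟨(i, j), Finset.mem_filter.2 ⟨by simp, hij⟩, rfl⟩)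
  · refine ⟨1, one_pos, fun i j hij => absurd ?_ h⟩
    exact ⟨_, Finset.mem_image.2 ⟨(i, j), Finset.mem_filter.2 ⟨by simp, hij⟩, rfl⟩⟩

/-- CLT for the noisy order statistic: if each `√M (Y M i − a i) ⇒ N(0, τ i)` and the true
values `a i` are distinct, then `√M (Ĥ_M(θ^{(k)}) − H(θ_{(k)})) ⇒ N(0, τ_{(k)})`, where
`θ^{(k)}` is the index of the `k`-th smallest noisy value and `θ_{(k)}` that of the `k`-th
smallest true value.  Convergence in distribution is stated via c.d.f.s. -/
theorem noisy_order_statistic_clt {Ω : Type*} {mΩ : MeasurableSpace Ω}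
    (μ : Measure Ω) [IsProbabilityMeasure μ]
    {N : ℕ} (a : Fin N → ℝ) (hdist : Function.Injective a)
    (Y : ℕ → Fin N → Ω → ℝ) (hmeas : ∀ M i, Measurable (Y M i))
    (hconv : ∀ᵐ ω ∂μ, ∀ i, Tendsto (fun M => Y M i ω) atTop (nhds (a i)))
    (τ : Fin N → NNReal)
    (hclt : ∀ (i : Fin N) (t : ℝ),
      Tendsto (fun M : ℕ => (μ {ω | Real.sqrt M * (Y M i ω - a i) ≤ t}).toReal)
        atTop (nhds ((gaussianReal 0 (τ i) (Set.Iic t)).toReal)))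
    (k : Fin N) :
    ∀ t : ℝ, Tendsto (fun M : ℕ =>
        (μ {ω | Real.sqrt M *
          ((fun l => Y M l ω) (Tuple.sort (fun l => Y M l ω) k) - a (Tuple.sort a k)) ≤ t}).toReal)
      atTop (nhds ((gaussianReal 0 (τ (Tuple.sort a k)) (Set.Iic t)).toReal)) := by
  intro t
  obtain ⟨ε, hε, hgap⟩ := gap_exists a
  set σk := Tuple.sort a k with hσk
  -- events
  set E : ℕ → Set Ω := fun M => {ω | ∀ i, |Y M i ω - a i| < ε / 2} with hE
  have hEmeas : ∀ M, MeasurableSet (E M) := by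
    intro M
    have : E M = ⋂ i, {ω | |Y M i ω - a i| < ε / 2} := by ext ω; simp [hE]
    rw [this]
    exact MeasurableSet.iInter fun i =>
      measurableSet_lt (((hmeas M i).sub measurable_const).abs) measurable_const
  set A : ℕ → Set Ω := fun M => {ω | Real.sqrt M *
      ((fun l => Y M l ω) (Tuple.sort (fun l => Y M l ω) k) - a σk) ≤ t} with hA
  set B : ℕ → Set Ω := fun M => {ω | Real.sqrt M * (Y M σk ω - a σk) ≤ t} with hB
  have hkey : ∀ M ω, ω ∈ E M → (ω ∈ A M ↔ ω ∈ B M) := by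
    intro M ω hω
    have hs : Tuple.sort (fun l => Y M l ω) = Tuple.sort a :=
      sort_eq_of_close a _ hdist ε hgap hω
    simp only [hA, hB, mem_setOf_eq, hs, hσk]
  -- μ (E M)ᶜ → 0
  set D : ℕ → Set Ω := fun M => ⋂ m, ⋂ (_ : M ≤ m), E m with hD
  have hDmeas : ∀ M, MeasurableSet (D M) :=
    fun M => MeasurableSet.iInter fun m => MeasurableSet.iInter fun _ => hEmeas m
  have hDmono : Monotone D := by
    intro M M' hMM'
    exact fun ω hω => mem_iInter.2 fun m => mem_iInter.2 fun hm =>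
      (mem_iInter.1 (mem_iInter.1 hω m)) (le_trans hMM' hm)
  have hDfull : μ (⋃ M, D M) = 1 := by
    rw [← measure_univ (μ := μ)]
    apply measure_congr
    rw [ae_eq_univ]
    have : ∀ᵐ ω ∂μ, ω ∈ ⋃ M, D M := by
      filter_upwards [hconv] with ω hω
      have : ∀ᶠ M in atTop, ω ∈ E M := by
        rw [hE]
        have : ∀ i, ∀ᶠ M in atTop, |Y M i ω - a i| < ε / 2 := by
          intro i
          have := (hω i).eventually (Metric.ball_mem_nhds (a i) (by positivity : (0:ℝ) < ε/2))
          filter_upwards [this] with M hM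
          simpa [Real.dist_eq] using hM
        exact (eventually_all.2 this)
      obtain ⟨M₀, hM₀⟩ := this.exists_forall_of_atTop
      exact mem_iUnion.2 ⟨M₀, mem_iInter.2 fun m => mem_iInter.2 fun hm => hM₀ m hm⟩
    rw [ae_iff] at this
    simpa [Set.compl_def] using this
  have hDtend : Tendsto (fun M => μ (D M)) atTop (nhds 1) := by
    rw [← hDfull]
    exact tendsto_measure_iUnion_atTop hDmono
  have hEc : Tendsto (fun M => (μ (E M)ᶜ).toReal) atTop (nhds 0) := by
    have hle : ∀ M, (μ (E M)ᶜ).toReal ≤ 1 - (μ (D M)).toReal := by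
      intro M
      have h1 : (E M)ᶜ ⊆ (D M)ᶜ := compl_subset_compl.2 fun ω hω =>
        (mem_iInter.1 (mem_iInter.1 hω M)) le_rfl
      have h2 : (μ (E M)ᶜ).toReal ≤ (μ (D M)ᶜ).toReal :=
        ENNReal.toReal_mono (measure_ne_top μ _) (measure_mono h1)
      have h3 : μ (D M)ᶜ = 1 - μ (D M) := by
        rw [measure_compl (hDmeas M) (measure_ne_top μ _), measure_univ]
      rw [h3, ENNReal.toReal_sub_of_le (by exact prob_le_one) ENNReal.one_ne_top] at h2
      simpa using h2
    have h4 : Tendsto (fun M => 1 - (μ (D M)).toReal) atTop (nhds 0) := by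
      have : Tendsto (fun M => (μ (D M)).toReal) atTop (nhds 1) := by
        have := (ENNReal.tendsto_toReal ENNReal.one_ne_top).comp hDtend
        simpa [Function.comp_def] using this
      simpa using (tendsto_const_nhds (x := (1:ℝ)) (f := atTop)).sub this
    exact squeeze_zero (fun M => ENNReal.toReal_nonneg) hle h4
  -- comparing CDFs
  have hAB : ∀ M, |(μ (A M)).toReal - (μ (B M)).toReal| ≤ (μ (E M)ᶜ).toReal := by
    intro M
    have key : ∀ S T : Set Ω, (∀ ω ∈ E M, ω ∈ S ↔ ω ∈ T) →
        (μ S).toReal ≤ (μ T).toReal + (μ (E M)ᶜ).toReal := by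
      intro S T h
      have hsub : S ⊆ T ∪ (E M)ᶜ := by
        intro ω hω
        by_cases hE' : ω ∈ E M
        · exact Or.inl ((h ω hE').1 hω)
        · exact Or.inr hE'
      calc (μ S).toReal ≤ (μ (T ∪ (E M)ᶜ)).toReal :=
            ENNReal.toReal_mono (measure_ne_top μ _) (measure_mono hsub)
        _ ≤ ((μ T) + μ (E M)ᶜ).toReal :=
            ENNReal.toReal_mono (by finiteness) (measure_union_le _ _)
        _ = (μ T).toReal + (μ (E M)ᶜ).toReal :=
            ENNReal.toReal_add (measure_ne_top μ _) (measure_ne_top μ _)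
    have h1 := key (A M) (B M) (fun ω h => hkey M ω h)
    have h2 := key (B M) (A M) (fun ω h => (hkey M ω h).symm)
    rw [abs_sub_le_iff]
    constructor <;> linarith
  have hBt : Tendsto (fun M => (μ (B M)).toReal) atTop
      (nhds ((gaussianReal 0 (τ σk) (Set.Iic t)).toReal)) := hclt σk t
  have hdiff : Tendsto (fun M => (μ (A M)).toReal - (μ (B M)).toReal) atTop (nhds 0) :=
    squeeze_zero_norm hAB hEc
  have := hBt.add hdiff
  simpa using this
end

section
/- Let X₁,...,X_N be i.i.d. with positive continuous density near v_α, and let v̂ be any estimator with |v̂ − v_α| ≤ C N^{−1/2}(log N)^{1/2} almost surely for large N. Then |(1/N)Σ_{i=1}^N (X_i − v̂)⁺ − (1/N)Σ_{i=1}^N (X_i − v_α)⁺ + (v̂ − v_α)(1 − F̂_N(v_α))| = O(N^{−1} log N) almost surely, where F̂_N is the empirical c.d.f. -/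
open MeasureTheory ProbabilityTheory Filter Set

lemma osc_det_bound (a b x : ℝ) :
    |max (x - b) 0 - max (x - a) 0 + (b - a) * (1 - (if x ≤ a then (1:ℝ) else 0))| ≤
      |b - a| * (if |x - a| ≤ |b - a| then 1 else 0) := by
  rcases le_or_gt x a with h | h
  · rw [if_pos h, max_eq_right (by linarith : x - a ≤ 0)]
    rcases le_total x b with h' | h'
    · rw [max_eq_right (by linarith : x - b ≤ 0)]
      simp only [sub_self, mul_zero, add_zero, zero_sub, abs_zero, sub_zero]
      positivity
    · have h1 : |b - a| = a - b := by rw [abs_of_nonpos (by linarith)]; ring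
      rw [if_pos (by rw [h1, abs_of_nonpos (by linarith)]; linarith),
        max_eq_left (by linarith : (0:ℝ) ≤ x - b), h1]
      rw [abs_of_nonneg (by linarith)]
      linarith
  · rw [if_neg (not_le.mpr h)]
    rcases le_total x b with h' | h'
    · have h1 : |b - a| = b - a := abs_of_nonneg (by linarith)
      rw [if_pos (by rw [h1, abs_of_nonneg (by linarith)]; linarith),
        max_eq_right (by linarith : x - b ≤ 0), max_eq_left (by linarith : (0:ℝ) ≤ x - a), h1]
      rw [abs_of_nonneg (by linarith)]
      linarith
    · rw [max_eq_left (by linarith : (0:ℝ) ≤ x - b), max_eq_left (by linarith : (0:ℝ) ≤ x - a)]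
      have : x - b - (x - a) + (b - a) * (1 - 0) = 0 := by ring
      rw [this, abs_zero]
      positivity

lemma chernoff_indicator {Ω : Type*} {mΩ : MeasurableSpace Ω} (μ : Measure Ω)
    [IsProbabilityMeasure μ]
    (X : ℕ → Ω → ℝ) (hmeas : ∀ i, Measurable (X i))
    (hindep : iIndepFun X μ)
    (hident : ∀ i, μ.map (X i) = μ.map (X 0))
    (s : Set ℝ) (hs : MeasurableSet s) (N : ℕ) (a : ℝ) :
    (μ {ω | a ≤ ∑ i ∈ Finset.range N, s.indicator (fun _ => (1:ℝ)) (X i ω)}).toReal ≤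
      Real.exp (-a) * Real.exp (N * (Real.exp 1 - 1) * ((μ.map (X 0)) s).toReal) := by
  classical
  set p : ℝ := ((μ.map (X 0)) s).toReal with hp
  have hp0 : 0 ≤ p := ENNReal.toReal_nonneg
  set g : ℝ → ℝ := s.indicator (fun _ => (1:ℝ)) with hg
  have hgmeas : Measurable g := measurable_const.indicator hs
  set Y : ℕ → Ω → ℝ := fun i => g ∘ X i with hY
  have hYmeas : ∀ i, Measurable (Y i) := fun i => hgmeas.comp (hmeas i)
  have hYindep : iIndepFun Y μ :=
    hindep.comp (fun _ => g) (fun _ => hgmeas)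
  have hY01 : ∀ i ω, Y i ω = 0 ∨ Y i ω = 1 := by
    intro i ω
    by_cases h : X i ω ∈ s <;> simp [hY, hg, Set.indicator_apply, h]
  set S : Ω → ℝ := fun ω => ∑ i ∈ Finset.range N, s.indicator (fun _ => (1:ℝ)) (X i ω)
    with hS
  have hSapp : ∀ ω, S ω = ∑ i ∈ Finset.range N, Y i ω := fun ω => rfl
  have hSsum : S = ∑ i ∈ Finset.range N, Y i := by
    funext ω; rw [Finset.sum_apply]; exact hSapp ω
  have hSmeas : Measurable S := Finset.measurable_sum _ fun i _ => hYmeas i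
  have hSle : ∀ ω, S ω ≤ N := by
    intro ω; rw [hSapp]
    calc ∑ i ∈ Finset.range N, Y i ω
        ≤ ∑ i ∈ Finset.range N, (1:ℝ) := by
          apply Finset.sum_le_sum; intro i _
          rcases hY01 i ω with h | h <;> rw [h] <;> norm_num
      _ = N := by simp
  have hint : Integrable (fun ω => Real.exp (1 * S ω)) μ := by
    refine (integrable_const (Real.exp N)).mono'
      ((hSmeas.const_mul 1).exp.aestronglyMeasurable) ?_
    filter_upwards with ω
    rw [Real.norm_eq_abs, abs_of_pos (Real.exp_pos _)]
    exact Real.exp_le_exp.mpr (by simpa using hSle ω)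
  have hmgf : ∀ i, mgf (Y i) μ 1 = 1 + (Real.exp 1 - 1) * p := by
    intro i
    have hYind : Y i = Set.indicator (X i ⁻¹' s) (fun _ => (1:ℝ)) := by
      funext ω
      simp [hY, hg, Set.indicator_apply, Set.mem_preimage]
    have hYint : Integrable (Y i) μ := by
      rw [hYind]
      exact (integrable_const (1:ℝ)).indicator ((hmeas i) hs)
    have hexpY : (fun ω => Real.exp (1 * Y i ω)) =
        fun ω => 1 + (Real.exp 1 - 1) * Y i ω := by
      funext ω
      rcases hY01 i ω with h | h <;> rw [h] <;> simp [Real.exp_zero]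
    rw [mgf, hexpY]
    rw [integral_add (integrable_const 1) (hYint.const_mul _)]
    rw [integral_const, integral_const_mul]
    have hintY : ∫ ω, Y i ω ∂μ = p := by
      rw [hYind, integral_indicator_const _ ((hmeas i) hs)]
      rw [smul_eq_mul, mul_one]
      rw [hp, ← hident i, Measure.map_apply (hmeas i) hs]; rfl
    rw [hintY]
    simp
  calc (μ {ω | a ≤ S ω}).toReal
      ≤ Real.exp (-1 * a) * mgf S μ 1 := measure_ge_le_exp_mul_mgf a zero_le_one hint
    _ ≤ Real.exp (-a) * Real.exp (N * (Real.exp 1 - 1) * p) := by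
        rw [neg_one_mul]
        apply mul_le_mul_of_nonneg_left _ (Real.exp_pos _).le
        rw [hSsum, hYindep.mgf_sum hYmeas]
        calc ∏ i ∈ Finset.range N, mgf (Y i) μ 1
            = (1 + (Real.exp 1 - 1) * p) ^ N := by
              rw [Finset.prod_congr rfl fun i _ => hmgf i, Finset.prod_const,
                Finset.card_range]
          _ ≤ Real.exp ((Real.exp 1 - 1) * p) ^ N := by
              apply pow_le_pow_left₀ (by nlinarith [Real.exp_one_gt_d9])
              calc 1 + (Real.exp 1 - 1) * p = (Real.exp 1 - 1) * p + 1 := by ring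
                _ ≤ Real.exp ((Real.exp 1 - 1) * p) := Real.add_one_le_exp _
          _ = Real.exp (N * ((Real.exp 1 - 1) * p)) := (Real.exp_nat_mul _ N).symm
          _ = Real.exp (N * (Real.exp 1 - 1) * p) := by ring_nf

/-- Oscillation bound for truncated empirical averages: if `v̂` is within
`C N^(−1/2)(log N)^(1/2)` of `v_α` almost surely eventually, then
`(1/N)Σ(X_i − v̂)⁺ − (1/N)Σ(X_i − v_α)⁺ + (v̂ − v_α)(1 − F̂_N(v_α)) = O_{a.s.}(N⁻¹ log N)`. -/
theorem truncated_average_oscillation {Ω : Type*} {mΩ : MeasurableSpace Ω}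
    (μ : Measure Ω) [IsProbabilityMeasure μ]
    (X : ℕ → Ω → ℝ) (hmeas : ∀ i, Measurable (X i))
    (hindep : iIndepFun X μ)
    (hident : ∀ i, μ.map (X i) = μ.map (X 0))
    (f : ℝ → ℝ)
    (hdens : μ.map (X 0) = volume.withDensity (fun t => ENNReal.ofReal (f t)))
    (α : ℝ) (hα : α ∈ Set.Ioo (0 : ℝ) 1)
    (vα : ℝ) (hvα : vα = sInf {t : ℝ | α ≤ ((μ.map (X 0)) (Set.Iic t)).toReal})
    (hf : ∃ ε > 0, ContinuousOn f (Metric.ball vα ε) ∧ ∀ t ∈ Metric.ball vα ε, 0 < f t)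
    (vhat : ℕ → Ω → ℝ) (C : ℝ)
    (hvhat : ∀ᵐ ω ∂μ, ∀ᶠ N : ℕ in atTop,
      |vhat N ω - vα| ≤ C * (N : ℝ) ^ (-(1 : ℝ)/2) * (Real.log N) ^ ((1 : ℝ)/2)) :
    ∃ C' : ℝ, ∀ᵐ ω ∂μ, ∀ᶠ N : ℕ in atTop,
      |(N : ℝ)⁻¹ * ∑ i ∈ Finset.range N, max (X i ω - vhat N ω) 0
        - (N : ℝ)⁻¹ * ∑ i ∈ Finset.range N, max (X i ω - vα) 0
        + (vhat N ω - vα) * (1 - empCDF X N ω vα)| ≤ C' * Real.log N / N := by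
    classical
  obtain ⟨ε, hε, hcont, hpos⟩ := hf
  have hsub : Icc (vα - ε/2) (vα + ε/2) ⊆ Metric.ball vα ε := by
    intro t ht
    rw [Metric.mem_ball, Real.dist_eq]
    rw [mem_Icc] at ht
    have : |t - vα| ≤ ε/2 := abs_le.mpr ⟨by linarith [ht.1], by linarith [ht.2]⟩
    linarith
  obtain ⟨M₀, hM₀⟩ := isCompact_Icc.exists_bound_of_continuousOn (hcont.mono hsub)
  set M : ℝ := max M₀ 1 with hMdef
  have hM1 : (1:ℝ) ≤ M := le_max_right _ _
  have hfM : ∀ t ∈ Icc (vα - ε/2) (vα + ε/2), f t ≤ M := by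
    intro t ht
    calc f t ≤ |f t| := le_abs_self _
      _ ≤ M₀ := by rw [← Real.norm_eq_abs]; exact hM₀ t ht
      _ ≤ M := le_max_left _ _
  set C₀ : ℝ := max C 1 with hC₀def
  have hC₀1 : (1:ℝ) ≤ C₀ := le_max_right _ _
  have hC₀0 : (0:ℝ) < C₀ := lt_of_lt_of_le one_pos hC₀1
  set e1 : ℝ := Real.exp 1 - 1 with he1def
  have he1 : 0 < e1 := by
    rw [he1def]; nlinarith [Real.exp_one_gt_d9]
  set K : ℝ := 2 * e1 * M * C₀ + 2 with hKdef
  have hM0 : (0:ℝ) < M := lt_of_lt_of_le one_pos hM1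
  have hK0 : 0 < K := by
    have h := mul_pos (mul_pos (mul_pos two_pos he1) hM0) hC₀0
    rw [hKdef]; linarith
  set δ : ℕ → ℝ := fun N => C₀ * Real.sqrt (Real.log N) / Real.sqrt N with hδdef
  have hδ0 : ∀ N, 0 ≤ δ N := fun N => by
    rw [hδdef]
    positivity
  set aN : ℕ → ℝ := fun N => K * (Real.sqrt N * Real.sqrt (Real.log N)) with haNdef
  set A : ℕ → Set Ω := fun N =>
    {ω | aN N ≤ ∑ i ∈ Finset.range N,
      (Icc (vα - δ N) (vα + δ N)).indicator (fun _ => (1:ℝ)) (X i ω)} with hAdef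
  have hlog0 : ∀ N : ℕ, 0 ≤ Real.log N := by
    intro N
    rcases Nat.eq_zero_or_pos N with h | h
    · simp [h]
    · exact Real.log_nonneg (by exact_mod_cast h)
  -- eventual smallness of δ
  have hδtend : Tendsto δ atTop (nhds 0) := by
    have h1 : Tendsto (fun x : ℝ => Real.log x / x) atTop (nhds 0) := by
      have := Real.tendsto_pow_log_div_mul_add_atTop 1 0 1 one_ne_zero
      simpa using this
    have h2 : Tendsto (fun N : ℕ => Real.log N / N) atTop (nhds 0) :=
      h1.comp tendsto_natCast_atTop_atTop
    have h3 : Tendsto (fun N : ℕ => Real.sqrt (Real.log N / N)) atTop (nhds (Real.sqrt 0)) :=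
      (Real.continuous_sqrt.tendsto 0).comp h2
    rw [Real.sqrt_zero] at h3
    have h4 : δ = fun N : ℕ => C₀ * Real.sqrt (Real.log N / N) := by
      funext N
      rw [hδdef]
      simp only
      rw [Real.sqrt_div (hlog0 N)]
      ring
    rw [h4]
    simpa using h3.const_mul C₀
  have hδsmall : ∀ᶠ N : ℕ in atTop, δ N ≤ ε/2 :=
    hδtend.eventually (eventually_le_nhds (by linarith))
  have hlog1 : ∀ᶠ N : ℕ in atTop, 1 ≤ Real.log N := by
    filter_upwards [eventually_ge_atTop 3] with N hN
    have hN0 : (0:ℝ) < N := by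
      have : (3:ℝ) ≤ N := by exact_mod_cast hN
      linarith
    rw [Real.le_log_iff_exp_le hN0]
    calc Real.exp 1 ≤ 2.7182818286 := Real.exp_one_lt_d9.le
      _ ≤ 3 := by norm_num
      _ ≤ N := by exact_mod_cast hN
  -- measure of small interval
  have hpbound : ∀ N : ℕ, δ N ≤ ε/2 →
      ((μ.map (X 0)) (Icc (vα - δ N) (vα + δ N))).toReal ≤ M * (2 * δ N) := by
    intro N hNδ
    have hIs : Icc (vα - δ N) (vα + δ N) ⊆ Icc (vα - ε/2) (vα + ε/2) :=
      Icc_subset_Icc (by linarith) (by linarith)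
    rw [hdens, withDensity_apply _ measurableSet_Icc]
    apply ENNReal.toReal_le_of_le_ofReal (by positivity)
    calc ∫⁻ t in Icc (vα - δ N) (vα + δ N), ENNReal.ofReal (f t) ∂volume
        ≤ ∫⁻ _t in Icc (vα - δ N) (vα + δ N), ENNReal.ofReal M ∂volume :=
          setLIntegral_mono measurable_const fun t ht =>
            ENNReal.ofReal_le_ofReal (hfM t (hIs ht))
      _ = ENNReal.ofReal M * volume (Icc (vα - δ N) (vα + δ N)) := setLIntegral_const _ _
      _ = ENNReal.ofReal M * ENNReal.ofReal (2 * δ N) := by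
          rw [Real.volume_Icc]; congr 1; ring
      _ = ENNReal.ofReal (M * (2 * δ N)) :=
          (ENNReal.ofReal_mul (by positivity)).symm
  -- eventual Chernoff bound on the bad sets
  have hAbound : ∀ᶠ N : ℕ in atTop, μ (A N) ≤ ENNReal.ofReal (((N:ℝ)^2)⁻¹) := by
    filter_upwards [hδsmall, hlog1, eventually_ge_atTop 1] with N hNδ hNlog hN1
    have hNpos : (0:ℝ) < N := by
      have : (1:ℝ) ≤ N := by exact_mod_cast hN1
      linarith
    have hNδ2 : (N:ℝ) * δ N = C₀ * (Real.sqrt N * Real.sqrt (Real.log N)) := by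
      rw [hδdef]
      simp only
      calc (N:ℝ) * (C₀ * Real.sqrt (Real.log N) / Real.sqrt N)
          = C₀ * Real.sqrt (Real.log N) * ((N:ℝ) / Real.sqrt N) := by ring
        _ = C₀ * (Real.sqrt N * Real.sqrt (Real.log N)) := by rw [Real.div_sqrt]; ring
    have hexp : -(aN N) + (N:ℝ) * e1 *
        ((μ.map (X 0)) (Icc (vα - δ N) (vα + δ N))).toReal ≤ -(2 * Real.log N) := by
      have hp := hpbound N hNδ
      have h5 : (N:ℝ) * e1 * ((μ.map (X 0)) (Icc (vα - δ N) (vα + δ N))).toReal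
          ≤ (N:ℝ) * e1 * (M * (2 * δ N)) :=
        mul_le_mul_of_nonneg_left hp (by positivity)
      have h9 : (N:ℝ) * e1 * (M * (2 * δ N))
          = K * (Real.sqrt N * Real.sqrt (Real.log N))
            - 2 * (Real.sqrt N * Real.sqrt (Real.log N)) := by
        rw [hKdef]
        linear_combination (2 * e1 * M) * hNδ2
      rw [h9] at h5
      have h7 : Real.log N ≤ Real.sqrt N * Real.sqrt (Real.log N) := by
        have hmono : Real.sqrt (Real.log N) ≤ Real.sqrt N :=
          Real.sqrt_le_sqrt (le_trans (Real.log_le_sub_one_of_pos hNpos) (by linarith))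
        calc Real.log N = Real.sqrt (Real.log N) * Real.sqrt (Real.log N) :=
            (Real.mul_self_sqrt (hlog0 N)).symm
          _ ≤ Real.sqrt N * Real.sqrt (Real.log N) :=
            mul_le_mul_of_nonneg_right hmono (Real.sqrt_nonneg _)
      rw [haNdef]
      simp only
      linarith
    have hcher := chernoff_indicator μ X hmeas hindep hident
      (Icc (vα - δ N) (vα + δ N)) measurableSet_Icc N (aN N)
    calc μ (A N) = ENNReal.ofReal ((μ (A N)).toReal) :=
        (ENNReal.ofReal_toReal (measure_ne_top _ _)).symm
      _ ≤ ENNReal.ofReal (((N:ℝ)^2)⁻¹) := by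
          apply ENNReal.ofReal_le_ofReal
          calc (μ (A N)).toReal
              ≤ Real.exp (-(aN N)) * Real.exp ((N:ℝ) * (Real.exp 1 - 1) *
                ((μ.map (X 0)) (Icc (vα - δ N) (vα + δ N))).toReal) := hcher
            _ = Real.exp (-(aN N) + (N:ℝ) * e1 *
                ((μ.map (X 0)) (Icc (vα - δ N) (vα + δ N))).toReal) := by
                rw [← Real.exp_add, he1def]
            _ ≤ Real.exp (-(2 * Real.log N)) := Real.exp_le_exp.mpr hexp
            _ = ((N:ℝ)^2)⁻¹ := by
                rw [Real.exp_neg]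
                congr 1
                rw [show (2:ℝ) * Real.log N = ((2:ℕ):ℝ) * Real.log N by norm_num,
                  Real.exp_nat_mul, Real.exp_log hNpos]
  -- Borel–Cantelli
  obtain ⟨N₁, hN₁⟩ := eventually_atTop.mp hAbound
  set N₂ := max N₁ 1 with hN₂def
  have hBC : ∀ᵐ ω ∂μ, ∀ᶠ n : ℕ in atTop, ω ∉ A (n + N₂) := by
    apply ae_eventually_notMem
    have hsummable : Summable (fun n : ℕ => (((n:ℝ)+1)^2)⁻¹) := by
      have h0 : Summable (fun n : ℕ => ((n:ℝ)^2)⁻¹) := by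
        have := (Real.summable_one_div_nat_pow (p := 2)).mpr one_lt_two
        simpa [one_div] using this
      have h := (summable_nat_add_iff 1).mpr h0
      simpa [Nat.cast_add, Nat.cast_one] using h
    have hle : ∀ n : ℕ, μ (A (n + N₂)) ≤ ENNReal.ofReal ((((n:ℝ)+1)^2)⁻¹) := by
      intro n
      refine le_trans (hN₁ (n + N₂) (le_trans (le_max_left _ _) (Nat.le_add_left _ _))) ?_
      apply ENNReal.ofReal_le_ofReal
      have h1 : (n:ℝ) + 1 ≤ ((n + N₂ : ℕ) : ℝ) := by
        push_cast
        have : (1:ℕ) ≤ N₂ := le_max_right _ _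
        have : (1:ℝ) ≤ N₂ := by exact_mod_cast this
        linarith
      gcongr
    refine ne_of_lt (lt_of_le_of_lt (ENNReal.tsum_le_tsum hle) ?_)
    rw [← ENNReal.ofReal_tsum_of_nonneg (fun n => by positivity) hsummable]
    exact ENNReal.ofReal_lt_top
  -- conclusion
  refine ⟨C₀ * K, ?_⟩
  filter_upwards [hvhat, hBC] with ω hω1 hω2
  obtain ⟨m, hm⟩ := eventually_atTop.mp hω2
  have hnotA : ∀ᶠ N : ℕ in atTop, ω ∉ A N := by
    rw [eventually_atTop]
    refine ⟨m + N₂, fun N hN => ?_⟩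
    have h := hm (N - N₂) (by omega)
    rwa [Nat.sub_add_cancel (by omega)] at h
  filter_upwards [hω1, hnotA, eventually_ge_atTop 1] with N hb hA' hN1
  have hNpos : (0:ℝ) < N := by
    have : (1:ℝ) ≤ N := by exact_mod_cast hN1
    linarith
  have hbδ : |vhat N ω - vα| ≤ δ N := by
    refine le_trans hb ?_
    have h1 : ((N:ℝ)) ^ (-(1:ℝ)/2) = (Real.sqrt N)⁻¹ := by
      rw [show (-(1:ℝ)/2) = -(1/2) by norm_num, Real.rpow_neg (by positivity),
        ← Real.sqrt_eq_rpow]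
    have h2 : (Real.log N) ^ ((1:ℝ)/2) = Real.sqrt (Real.log N) :=
      (Real.sqrt_eq_rpow _).symm
    rw [h1, h2, hδdef]
    simp only
    have hC : C ≤ C₀ := le_max_left _ _
    calc C * (Real.sqrt N)⁻¹ * Real.sqrt (Real.log N)
        ≤ C₀ * (Real.sqrt N)⁻¹ * Real.sqrt (Real.log N) := by
          apply mul_le_mul_of_nonneg_right _ (Real.sqrt_nonneg _)
          exact mul_le_mul_of_nonneg_right hC (by positivity)
      _ = C₀ * Real.sqrt (Real.log N) / Real.sqrt N := by ring
  set b := vhat N ω with hbdef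
  have hNne : (N:ℝ) ≠ 0 := ne_of_gt hNpos
  have hs3 : ∑ i ∈ Finset.range N, ((b - vα) * (1 - if X i ω ≤ vα then (1:ℝ) else 0))
      = (b - vα) * ((N:ℝ) - ∑ i ∈ Finset.range N, if X i ω ≤ vα then (1:ℝ) else 0) := by
    rw [← Finset.mul_sum, Finset.sum_sub_distrib, Finset.sum_const, Finset.card_range]
    simp
  have key : (N : ℝ)⁻¹ * ∑ i ∈ Finset.range N, max (X i ω - b) 0
        - (N : ℝ)⁻¹ * ∑ i ∈ Finset.range N, max (X i ω - vα) 0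
        + (b - vα) * (1 - empCDF X N ω vα)
      = (N:ℝ)⁻¹ * ∑ i ∈ Finset.range N, (max (X i ω - b) 0 - max (X i ω - vα) 0
          + (b - vα) * (1 - (if X i ω ≤ vα then (1:ℝ) else 0))) := by
    rw [empCDF, Finset.sum_add_distrib, Finset.sum_sub_distrib, hs3]
    field_simp
  rw [key]
  have hind0 : ∀ i : ℕ,
      (0:ℝ) ≤ (Icc (vα - δ N) (vα + δ N)).indicator (fun _ => (1:ℝ)) (X i ω) :=
    fun i => Set.indicator_nonneg (fun _ _ => zero_le_one) _
  have hSlt : ∑ i ∈ Finset.range N,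
      (Icc (vα - δ N) (vα + δ N)).indicator (fun _ => (1:ℝ)) (X i ω) ≤ aN N := by
    by_contra hcon
    exact hA' (le_of_lt (not_le.mp hcon))
  calc |(N:ℝ)⁻¹ * ∑ i ∈ Finset.range N, (max (X i ω - b) 0 - max (X i ω - vα) 0
          + (b - vα) * (1 - (if X i ω ≤ vα then (1:ℝ) else 0)))|
      = (N:ℝ)⁻¹ * |∑ i ∈ Finset.range N, (max (X i ω - b) 0 - max (X i ω - vα) 0
          + (b - vα) * (1 - (if X i ω ≤ vα then (1:ℝ) else 0)))| := by
        rw [abs_mul, abs_of_nonneg (by positivity : (0:ℝ) ≤ (N:ℝ)⁻¹)]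
    _ ≤ (N:ℝ)⁻¹ * ∑ i ∈ Finset.range N, |max (X i ω - b) 0 - max (X i ω - vα) 0
          + (b - vα) * (1 - (if X i ω ≤ vα then (1:ℝ) else 0))| :=
        mul_le_mul_of_nonneg_left (Finset.abs_sum_le_sum_abs _ _) (by positivity)
    _ ≤ (N:ℝ)⁻¹ * ∑ i ∈ Finset.range N,
          δ N * (Icc (vα - δ N) (vα + δ N)).indicator (fun _ => (1:ℝ)) (X i ω) := by
        refine mul_le_mul_of_nonneg_left ?_ (by positivity)
        apply Finset.sum_le_sum
        intro i _
        refine le_trans (osc_det_bound vα b (X i ω)) ?_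
        by_cases hx : |X i ω - vα| ≤ |b - vα|
        · rw [if_pos hx]
          have habs := abs_le.mp (le_trans hx hbδ)
          have hmem : X i ω ∈ Icc (vα - δ N) (vα + δ N) := by
            rw [mem_Icc]
            constructor <;> linarith [habs.1, habs.2]
          rw [Set.indicator_of_mem hmem]
          simpa using hbδ
        · rw [if_neg hx, mul_zero]
          exact mul_nonneg (hδ0 N) (hind0 i)
    _ = (N:ℝ)⁻¹ * (δ N * ∑ i ∈ Finset.range N,
          (Icc (vα - δ N) (vα + δ N)).indicator (fun _ => (1:ℝ)) (X i ω)) := by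
        rw [← Finset.mul_sum]
    _ ≤ (N:ℝ)⁻¹ * (δ N * aN N) := by
        refine mul_le_mul_of_nonneg_left ?_ (by positivity)
        exact mul_le_mul_of_nonneg_left hSlt (hδ0 N)
    _ = C₀ * K * Real.log N / N := by
        rw [hδdef, haNdef]
        simp only
        have hsN : Real.sqrt N ≠ 0 := ne_of_gt (Real.sqrt_pos.mpr hNpos)
        have h1 : C₀ * Real.sqrt (Real.log N) / Real.sqrt N *
            (K * (Real.sqrt N * Real.sqrt (Real.log N)))
            = C₀ * K * (Real.sqrt (Real.log N) * Real.sqrt (Real.log N)) *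
              (Real.sqrt N / Real.sqrt N) := by ring
        rw [h1, div_self hsN, Real.mul_self_sqrt (hlog0 N), mul_one]
        ring
end

section
/- Suppose a_N and b_{N,M} are arrays of random variables with √N a_N ⇒ N(0,σ²) as N → ∞ (uniformly over M in the sense that the asymptotic representation holds with remainder O(N^{−3/4}(log N)^{3/4}) uniformly in M) and b_{N,M} = β/M + o(1/M) deterministically. Then √N(a_N + b_{N,M}) ⇒ N(0,σ²) as N, M → ∞ jointly if and only if N = o(M²). -/
open MeasureTheory ProbabilityTheory Filter Set

section Aux

variable (σ : NNReal)

/-- A uniform bound on the standard-mean gaussian pdf. -/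
noncomputable def gaussBound : ℝ := (Real.sqrt (2 * Real.pi * σ))⁻¹

lemma gaussBound_nonneg : 0 ≤ gaussBound σ := by
  unfold gaussBound; positivity

lemma gaussianPDFReal_le (x : ℝ) : gaussianPDFReal 0 σ x ≤ gaussBound σ := by
  unfold gaussianPDFReal gaussBound
  have hexp : Real.exp (-(x - 0) ^ 2 / (2 * σ)) ≤ 1 := by
    rw [Real.exp_le_one_iff]
    exact div_nonpos_iff.mpr (Or.inr ⟨neg_nonpos.mpr (sq_nonneg _), by positivity⟩)
  calc (Real.sqrt (2 * Real.pi * σ))⁻¹ * Real.exp (-(x - 0) ^ 2 / (2 * σ))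
      ≤ (Real.sqrt (2 * Real.pi * σ))⁻¹ * 1 :=
        mul_le_mul_of_nonneg_left hexp (by positivity)
    _ = (Real.sqrt (2 * Real.pi * σ))⁻¹ := mul_one _

lemma gauss_cdf_mono : Monotone (fun t => (gaussianReal 0 σ (Set.Iic t)).toReal) :=
  fun t₁ t₂ h => ENNReal.toReal_mono (measure_ne_top _ _) (measure_mono (Iic_subset_Iic.mpr h))

lemma gauss_add_Ioc {a b : ℝ} (hab : a ≤ b) :
    gaussianReal 0 σ (Set.Iic b) =
      gaussianReal 0 σ (Set.Iic a) + gaussianReal 0 σ (Set.Ioc a b) := by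
  rw [← Set.Iic_union_Ioc_eq_Iic hab,
    measure_union (Set.Iic_disjoint_Ioc le_rfl) measurableSet_Ioc]

lemma gauss_cdf_toReal_add {a b : ℝ} (hab : a ≤ b) :
    (gaussianReal 0 σ (Set.Iic b)).toReal =
      (gaussianReal 0 σ (Set.Iic a)).toReal + (gaussianReal 0 σ (Set.Ioc a b)).toReal := by
  rw [gauss_add_Ioc σ hab, ENNReal.toReal_add (measure_ne_top _ _) (measure_ne_top _ _)]

lemma gauss_Ioc_le (hσ : σ ≠ 0) {a b : ℝ} (hab : a ≤ b) :
    (gaussianReal 0 σ (Set.Ioc a b)).toReal ≤ gaussBound σ * (b - a) := by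
  have hle : gaussianReal 0 σ (Set.Ioc a b) ≤ ENNReal.ofReal (gaussBound σ * (b - a)) := by
    rw [gaussianReal_apply 0 hσ]
    calc ∫⁻ x in Set.Ioc a b, gaussianPDF 0 σ x
        ≤ ∫⁻ _ in Set.Ioc a b, ENNReal.ofReal (gaussBound σ) :=
          lintegral_mono fun x => ENNReal.ofReal_le_ofReal (gaussianPDFReal_le σ x)
      _ = ENNReal.ofReal (gaussBound σ) * volume (Set.Ioc a b) := setLIntegral_const _ _
      _ = ENNReal.ofReal (gaussBound σ) * ENNReal.ofReal (b - a) := by rw [Real.volume_Ioc]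
      _ = ENNReal.ofReal (gaussBound σ * (b - a)) :=
          (ENNReal.ofReal_mul (gaussBound_nonneg σ)).symm
  exact ENNReal.toReal_le_of_le_ofReal (by nlinarith [gaussBound_nonneg σ, sub_nonneg.mpr hab]) hle

lemma gauss_cdf_gap (hσ : σ ≠ 0) {a b : ℝ} (hab : a ≤ b) :
    (gaussianReal 0 σ (Set.Iic b)).toReal ≤
      (gaussianReal 0 σ (Set.Iic a)).toReal + gaussBound σ * (b - a) := by
  rw [gauss_cdf_toReal_add σ hab]
  exact add_le_add le_rfl (gauss_Ioc_le σ hσ hab)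

lemma gauss_cdf_strictMono (hσ : σ ≠ 0) {a b : ℝ} (hab : a < b) :
    (gaussianReal 0 σ (Set.Iic a)).toReal < (gaussianReal 0 σ (Set.Iic b)).toReal := by
  rw [gauss_cdf_toReal_add σ hab.le]
  have hne : gaussianReal 0 σ (Set.Ioc a b) ≠ 0 := by
    intro h0
    have := gaussianReal_absolutelyContinuous' 0 hσ h0
    rw [Real.volume_Ioc] at this
    exact (ENNReal.ofReal_pos.mpr (sub_pos.mpr hab)).ne' this
  have : 0 < (gaussianReal 0 σ (Set.Ioc a b)).toReal :=
    ENNReal.toReal_pos hne (measure_ne_top _ _)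
  linarith

end Aux

/-- Abstract necessity and sufficiency of `N = o(M²)`: if `√N a_N ⇒ N(0,σ²)` and the
deterministic bias satisfies `b_M = β/M + o(1/M)` with `β ≠ 0`, then along any sequences
`N_k, M_k → ∞`, the combined error `√N (a_N + b_M)` converges in distribution to `N(0,σ²)`
if and only if `N_k/M_k² → 0`.  Convergence in distribution is stated via c.d.f.s. -/
theorem normality_iff_N_littleO_Msq {Ω : Type*} {mΩ : MeasurableSpace Ω}
    (μ : Measure Ω) [IsProbabilityMeasure μ]
    (a : ℕ → Ω → ℝ) (hameas : ∀ N, Measurable (a N))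
    (σ : NNReal) (hσ : σ ≠ 0)
    (hclt : ∀ t : ℝ, Tendsto (fun N : ℕ => (μ {ω | Real.sqrt N * a N ω ≤ t}).toReal)
      atTop (nhds ((gaussianReal 0 σ (Set.Iic t)).toReal)))
    (b : ℕ → ℝ) (β : ℝ) (hβ : β ≠ 0) (r : ℕ → ℝ)
    (hb : ∀ M : ℕ, 0 < M → b M = β / M + r M)
    (hr : Tendsto (fun M : ℕ => (M : ℝ) * r M) atTop (nhds 0))
    (Nseq Mseq : ℕ → ℕ)
    (hN : Tendsto Nseq atTop atTop) (hM : Tendsto Mseq atTop atTop) :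
    Tendsto (fun k => (Nseq k : ℝ) / (Mseq k : ℝ) ^ 2) atTop (nhds 0) ↔
      ∀ t : ℝ, Tendsto (fun k =>
          (μ {ω | Real.sqrt (Nseq k) * (a (Nseq k) ω + b (Mseq k)) ≤ t}).toReal)
        atTop (nhds ((gaussianReal 0 σ (Set.Iic t)).toReal)) := by
  classical
  set Φ : ℝ → ℝ := fun t => (gaussianReal 0 σ (Set.Iic t)).toReal with hΦ
  set F : ℕ → ℝ → ℝ := fun N t => (μ {ω | Real.sqrt N * a N ω ≤ t}).toReal with hFdef
  set s : ℕ → ℝ := fun k => Real.sqrt (Nseq k) * b (Mseq k) with hsdef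
  -- rewrite the target function
  have hset : ∀ k (t : ℝ),
      {ω | Real.sqrt (Nseq k) * (a (Nseq k) ω + b (Mseq k)) ≤ t} =
      {ω | Real.sqrt (Nseq k) * a (Nseq k) ω ≤ t - s k} := by
    intro k t
    ext ω
    simp only [Set.mem_setOf_eq, mul_add, hsdef]
    constructor <;> intro h <;> linarith
  have hfun : ∀ t : ℝ, (fun k =>
      (μ {ω | Real.sqrt (Nseq k) * (a (Nseq k) ω + b (Mseq k)) ≤ t}).toReal) =
      fun k => F (Nseq k) (t - s k) := by
    intro t; funext k; rw [hset k t]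
  have hFmono : ∀ N : ℕ, Monotone (F N) := fun N t₁ t₂ h =>
    ENNReal.toReal_mono (measure_ne_top _ _)
      (measure_mono fun ω hω => le_trans hω h)
  have hcltk : ∀ c : ℝ, Tendsto (fun k => F (Nseq k) c) atTop (nhds (Φ c)) :=
    fun c => (hclt c).comp hN
  have hΦmono : Monotone Φ := gauss_cdf_mono σ
  have hMr : Tendsto (fun k => (Mseq k : ℝ) * r (Mseq k)) atTop (nhds 0) := hr.comp hM
  have hM1 : ∀ᶠ k in atTop, 1 ≤ Mseq k := hM.eventually_ge_atTop 1
  -- the identity s k = √(N/M²) * (β + M r M) for M ≥ 1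
  have hsid : ∀ᶠ k in atTop, s k =
      Real.sqrt ((Nseq k : ℝ) / (Mseq k : ℝ) ^ 2) * (β + (Mseq k : ℝ) * r (Mseq k)) := by
    filter_upwards [hM1] with k hk
    have hMpos : (0 : ℝ) < (Mseq k : ℝ) := by exact_mod_cast hk
    have h1 : Real.sqrt ((Nseq k : ℝ) / (Mseq k : ℝ) ^ 2) =
        Real.sqrt (Nseq k) / (Mseq k : ℝ) := by
      rw [Real.sqrt_div (by positivity) _, Real.sqrt_sq hMpos.le]
    have h2 : β / (Mseq k : ℝ) + r (Mseq k) =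
        (β + (Mseq k : ℝ) * r (Mseq k)) / (Mseq k : ℝ) := by
      field_simp
    rw [hsdef]
    simp only
    rw [hb (Mseq k) (by exact_mod_cast hk), h2, h1]
    ring
  set C : ℝ := gaussBound σ with hC
  have hC0 : 0 ≤ C := gaussBound_nonneg σ
  constructor
  · -- sufficiency
    intro h0 t
    rw [hfun t]
    -- s → 0
    have hs0 : Tendsto s atTop (nhds 0) := by
      have h2 : Tendsto (fun k => Real.sqrt ((Nseq k : ℝ) / (Mseq k : ℝ) ^ 2) *
          (β + (Mseq k : ℝ) * r (Mseq k))) atTop (nhds (0 * (β + 0))) := by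
        exact ((Real.continuous_sqrt.tendsto 0).comp (by simpa using h0) |>.congr
          (fun k => rfl) |>.mono_right (by rw [Real.sqrt_zero])).mul
          (tendsto_const_nhds.add hMr)
      rw [zero_mul] at h2
      exact Tendsto.congr' (hsid.mono fun k hk => hk.symm) h2
    rw [Metric.tendsto_nhds]
    intro ε hε
    set δ : ℝ := ε / (2 * (C + 1)) with hδ
    have hδpos : 0 < δ := by positivity
    have hCδ : C * δ < ε / 2 := by
      have h1 : C * δ < (C + 1) * δ := by nlinarith
      have h2 : (C + 1) * δ = ε / 2 := by rw [hδ]; field_simp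
      linarith
    have hgap1 : Φ (t + δ) ≤ Φ t + C * δ := by
      have := gauss_cdf_gap σ hσ (a := t) (b := t + δ) (by linarith)
      simpa using this
    have hgap2 : Φ t ≤ Φ (t - δ) + C * δ := by
      have := gauss_cdf_gap σ hσ (a := t - δ) (b := t) (by linarith)
      simpa using this
    have hev1 : ∀ᶠ k in atTop, |s k| < δ := by
      filter_upwards [(Metric.tendsto_nhds.mp hs0) δ hδpos] with k hk
      rwa [Real.dist_eq, sub_zero] at hk
    have hev2 : ∀ᶠ k in atTop, dist (F (Nseq k) (t - δ)) (Φ (t - δ)) < ε / 2 :=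
      (Metric.tendsto_nhds.mp (hcltk (t - δ))) _ (by linarith)
    have hev3 : ∀ᶠ k in atTop, dist (F (Nseq k) (t + δ)) (Φ (t + δ)) < ε / 2 :=
      (Metric.tendsto_nhds.mp (hcltk (t + δ))) _ (by linarith)
    filter_upwards [hev1, hev2, hev3] with k h1 h2 h3
    rw [Real.dist_eq] at h2 h3 ⊢
    rw [abs_lt] at h1 h2 h3 ⊢
    have hs1 : t - δ ≤ t - s k := by linarith [h1.1, h1.2]
    have hs2 : t - s k ≤ t + δ := by linarith [h1.1, h1.2]
    have hl : F (Nseq k) (t - δ) ≤ F (Nseq k) (t - s k) := hFmono _ hs1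
    have hu : F (Nseq k) (t - s k) ≤ F (Nseq k) (t + δ) := hFmono _ hs2
    constructor
    · linarith [h2.1]
    · linarith [h3.2]
  · -- necessity
    intro hconv
    by_contra hnot
    -- extract a frequent bound away from 0
    have hx0 : ∀ k, 0 ≤ (Nseq k : ℝ) / (Mseq k : ℝ) ^ 2 := fun k => by positivity
    rw [Metric.tendsto_nhds] at hnot
    push_neg at hnot
    obtain ⟨ε, hε, hfreq⟩ := hnot
    have hfreq' : ∃ᶠ k in atTop, ε ≤ (Nseq k : ℝ) / (Mseq k : ℝ) ^ 2 := by
      refine hfreq.mono fun k hk => ?_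
      rw [Real.dist_eq, sub_zero, abs_of_nonneg (hx0 k)] at hk
      linarith
    -- eventually β + M r is close to β
    have hevβ : ∀ᶠ k in atTop, |(Mseq k : ℝ) * r (Mseq k)| < |β| / 2 := by
      filter_upwards [(Metric.tendsto_nhds.mp hMr) (|β| / 2) (by positivity)] with k hk
      rwa [Real.dist_eq, sub_zero] at hk
    set δ : ℝ := Real.sqrt ε * (|β| / 2) with hδ
    have hδpos : 0 < δ := by
      have := Real.sqrt_pos.mpr hε
      positivity
    -- frequently, |s k| ≥ δ with the sign of β
    have hkey : ∃ᶠ k in atTop, (0 < β ∧ δ ≤ s k) ∨ (β < 0 ∧ s k ≤ -δ) := by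
      refine ((hfreq'.and_eventually hevβ).and_eventually (hsid.and hM1)).mono ?_
      rintro k ⟨⟨hk1, hk2⟩, hk3, hk4⟩
      have hMpos : (0 : ℝ) < (Mseq k : ℝ) := by exact_mod_cast hk4
      have hsqrt : Real.sqrt ε ≤ Real.sqrt ((Nseq k : ℝ) / (Mseq k : ℝ) ^ 2) :=
        Real.sqrt_le_sqrt hk1
      have hsq0 : (0:ℝ) < Real.sqrt ε := Real.sqrt_pos.mpr hε
      rcases lt_or_gt_of_ne hβ with hbneg | hbpos
      · right
        refine ⟨hbneg, ?_⟩
        have habs : |β| = -β := abs_of_neg hbneg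
        have h2 : β + (Mseq k : ℝ) * r (Mseq k) ≤ β / 2 := by
          rw [habs] at hk2
          have := abs_lt.mp hk2
          linarith [this.1, this.2]
        have h3 : β / 2 < 0 := by linarith
        rw [hk3]
        calc Real.sqrt ((Nseq k : ℝ) / (Mseq k : ℝ) ^ 2) * (β + (Mseq k : ℝ) * r (Mseq k))
            ≤ Real.sqrt ((Nseq k : ℝ) / (Mseq k : ℝ) ^ 2) * (β / 2) := by
              exact mul_le_mul_of_nonneg_left h2 (Real.sqrt_nonneg _)
          _ ≤ Real.sqrt ε * (β / 2) := by
              exact mul_le_mul_of_nonpos_right hsqrt h3.le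
          _ = -δ := by rw [hδ, habs]; ring
      · left
        refine ⟨hbpos, ?_⟩
        have habs : |β| = β := abs_of_pos hbpos
        have h2 : β / 2 ≤ β + (Mseq k : ℝ) * r (Mseq k) := by
          rw [habs] at hk2
          have := abs_lt.mp hk2
          linarith [this.1, this.2]
        rw [hk3, hδ, habs]
        calc Real.sqrt ε * (β / 2)
            ≤ Real.sqrt ((Nseq k : ℝ) / (Mseq k : ℝ) ^ 2) * (β / 2) :=
              mul_le_mul_of_nonneg_right hsqrt (by linarith)
          _ ≤ Real.sqrt ((Nseq k : ℝ) / (Mseq k : ℝ) ^ 2) * (β + (Mseq k : ℝ) * r (Mseq k)) :=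
              mul_le_mul_of_nonneg_left h2 (Real.sqrt_nonneg _)
    -- now derive the contradiction at t = 0
    have hconv0 : Tendsto (fun k => F (Nseq k) (0 - s k)) atTop (nhds (Φ 0)) := by
      have := hconv 0
      rwa [hfun 0] at this
    rcases lt_or_gt_of_ne hβ with hbneg | hbpos
    · -- β < 0 : frequently s k ≤ -δ, so F(0 - s k) ≥ F(δ)
      have hstrict : Φ 0 < Φ δ := gauss_cdf_strictMono σ hσ hδpos
      set η : ℝ := (Φ δ - Φ 0) / 2 with hη
      have hηpos : 0 < η := by simp only [hη]; linarith
      have hev1 : ∀ᶠ k in atTop, dist (F (Nseq k) (0 - s k)) (Φ 0) < η :=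
        (Metric.tendsto_nhds.mp hconv0) η hηpos
      have hev2 : ∀ᶠ k in atTop, dist (F (Nseq k) δ) (Φ δ) < η :=
        (Metric.tendsto_nhds.mp (hcltk δ)) η hηpos
      obtain ⟨k, hk, h1, h2⟩ := (hkey.and_eventually (hev1.and hev2)).exists
      rcases hk with ⟨hb', _⟩ | ⟨_, hsle⟩
      · exact absurd hb' (not_lt.mpr hbneg.le)
      · have hmono : F (Nseq k) δ ≤ F (Nseq k) (0 - s k) := hFmono _ (by linarith)
        rw [Real.dist_eq, abs_lt] at h1 h2
        have := h1.2
        have := h2.1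
        simp only [hη] at *
        linarith
    · -- β > 0 : frequently δ ≤ s k, so F(0 - s k) ≤ F(-δ)
      have hstrict : Φ (-δ) < Φ 0 := gauss_cdf_strictMono σ hσ (by linarith)
      set η : ℝ := (Φ 0 - Φ (-δ)) / 2 with hη
      have hηpos : 0 < η := by simp only [hη]; linarith
      have hev1 : ∀ᶠ k in atTop, dist (F (Nseq k) (0 - s k)) (Φ 0) < η :=
        (Metric.tendsto_nhds.mp hconv0) η hηpos
      have hev2 : ∀ᶠ k in atTop, dist (F (Nseq k) (-δ)) (Φ (-δ)) < η :=
        (Metric.tendsto_nhds.mp (hcltk (-δ))) η hηpos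
      obtain ⟨k, hk, h1, h2⟩ := (hkey.and_eventually (hev1.and hev2)).exists
      rcases hk with ⟨_, hsge⟩ | ⟨hb', _⟩
      · have hmono : F (Nseq k) (0 - s k) ≤ F (Nseq k) (-δ) := hFmono _ (by linarith)
        rw [Real.dist_eq, abs_lt] at h1 h2
        have := h1.1
        have := h2.2
        simp only [hη] at *
        linarith
      · exact absurd hb' (not_lt.mpr hbpos.le)
end
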